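/- arXiv:2603.26301 — 3 statements merged into one kernel-verified Lean document; each statement's English description precedes it below -/
import Mathlib

section
/- Let A=(I,O,L,S,E) be an ilsADMG. Then there exists exactly one iMAG M that represents A; it is denoted MAG(A). Explicitly, M has input nodes I and output nodes O; distinct a,b∈I∪O are adjacent in M iff {a,b}⊄I and there is an (L,S)-inducing path between a and b in A; and on each edge the mark at a is a tail if a∈Anc_A({b}∪S) and an arrowhead otherwise. -/
noncomputable section
open Classical

/-- Edge-endpoint marks: tail `−`, arrowhead `>`, or circle `∘`. -/
inductive Mark : Type
  | tail
  | arrow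
  | circle
  deriving DecidableEq

/-- A mixed graph with input nodes over a node type `N`, as raw data.
`mark a b` is the mark at `a` on the (unique) edge between `a` and `b`,
or `none` if there is no edge between `a` and `b`. -/
structure MixedGraph (N : Type) where
  inputs : Set N
  outputs : Set N
  mark : N → N → Option Mark

namespace MixedGraph

variable {N N' : Type}

/-- All nodes of the graph. -/
def nodes (G : MixedGraph N) : Set N := G.inputs ∪ G.outputs

/-- `a` and `b` are adjacent (joined by an edge). -/
def adj (G : MixedGraph N) (a b : N) : Prop := (G.mark a b).isSome

/-- Directed edge `a → b`: tail at `a`, arrowhead at `b`. -/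
def dir (G : MixedGraph N) (a b : N) : Prop :=
  G.mark a b = some Mark.tail ∧ G.mark b a = some Mark.arrow

/-- Bidirected edge `a ↔ b`. -/
def bidir (G : MixedGraph N) (a b : N) : Prop :=
  G.mark a b = some Mark.arrow ∧ G.mark b a = some Mark.arrow

/-- Undirected edge `a − b`. -/
def undir (G : MixedGraph N) (a b : N) : Prop :=
  G.mark a b = some Mark.tail ∧ G.mark b a = some Mark.tail

/-- Edge `a ∘→ b`: circle at `a`, arrowhead at `b`. -/
def circArrow (G : MixedGraph N) (a b : N) : Prop :=
  G.mark a b = some Mark.circle ∧ G.mark b a = some Mark.arrow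

/-- Edge `a ∘−∘ b`: circles at both ends. -/
def circCirc (G : MixedGraph N) (a b : N) : Prop :=
  G.mark a b = some Mark.circle ∧ G.mark b a = some Mark.circle

/-- Edge `a ∘− b`: circle at `a`, tail at `b`. -/
def circTail (G : MixedGraph N) (a b : N) : Prop :=
  G.mark a b = some Mark.circle ∧ G.mark b a = some Mark.tail

/-- Edge `a −∘ b`: tail at `a`, circle at `b`. -/
def tailCirc (G : MixedGraph N) (a b : N) : Prop :=
  G.mark a b = some Mark.tail ∧ G.mark b a = some Mark.circle

/-- Some edge of `G` carries an arrowhead at `a`. -/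
def arrowAt (G : MixedGraph N) (a : N) : Prop :=
  ∃ b, G.mark a b = some Mark.arrow

/-- `a` is an ancestor of `b`: `a = b` or a directed path `a → ⋯ → b` exists. -/
def anc (G : MixedGraph N) : N → N → Prop := Relation.ReflTransGen G.dir

/-- The ancestors of a set `S` of nodes. -/
def ancSet (G : MixedGraph N) (S : Set N) : Set N := {a | ∃ s ∈ S, G.anc a s}

/-- Potentially directed edge from `a` towards `b`: an edge with no arrowhead at its
earlier endpoint `a` and no tail at its later endpoint `b`. -/
def potDir (G : MixedGraph N) (a b : N) : Prop :=
  G.adj a b ∧ G.mark a b ≠ some Mark.arrow ∧ G.mark b a ≠ some Mark.tail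

/-- `a` is a possible ancestor of `b`: `a = b` or a potentially directed path runs
from `a` to `b`. -/
def poAn (G : MixedGraph N) : N → N → Prop := Relation.ReflTransGen G.potDir

/-- The possible ancestors of a set `S` of nodes. -/
def poAnSet (G : MixedGraph N) (S : Set N) : Set N := {a | ∃ s ∈ S, G.poAn a s}

/-- Well-formedness of a mixed graph with input nodes: inputs and outputs are disjoint
finite sets, edges are symmetric and irreflexive and join nodes of the graph. -/
def WF (G : MixedGraph N) : Prop :=
  Disjoint G.inputs G.outputs ∧ G.inputs.Finite ∧ G.outputs.Finite ∧
  (∀ a b, (G.mark a b).isSome → (G.mark b a).isSome) ∧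
  (∀ a, G.mark a a = none) ∧
  (∀ a b, (G.mark a b).isSome → a ∈ G.nodes ∧ b ∈ G.nodes)

/-- The induced subgraph of `G` over the node set `A`. -/
def induce (G : MixedGraph N) (A : Set N) : MixedGraph N where
  inputs := G.inputs ∩ A
  outputs := G.outputs ∩ A
  mark := fun a b => if a ∈ A ∧ b ∈ A then G.mark a b else none

/-- Transport a mixed graph over `N` to one over `N ⊕ N'` along `Sum.inl`. -/
def sumInl (G : MixedGraph N) : MixedGraph (N ⊕ N') where
  inputs := Sum.inl '' G.inputs
  outputs := Sum.inl '' G.outputs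
  mark := fun x y =>
    match x, y with
    | Sum.inl a, Sum.inl b => G.mark a b
    | _, _ => none

/-- `G` is a subgraph of `H`: its nodes and marked edges are among those of `H`. -/
def Subgraph (G H : MixedGraph N) : Prop :=
  G.inputs ⊆ H.inputs ∧ G.outputs ⊆ H.outputs ∧
  ∀ a b m, G.mark a b = some m → H.mark a b = some m

end MixedGraph

/-- A walk in `G` with `len` edges, visiting the nodes `f 0, …, f len`
(consecutive nodes are adjacent). -/
structure GWalk {N : Type} (G : MixedGraph N) where
  len : ℕ
  f : ℕ → N
  hadj : ∀ i < len, G.adj (f i) (f (i + 1))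

namespace GWalk

variable {N : Type} {G : MixedGraph N}

/-- The first node of the walk. -/
def first (w : GWalk G) : N := w.f 0

/-- The last node of the walk. -/
def last (w : GWalk G) : N := w.f w.len

/-- The walk is a path: no repeated nodes. -/
def IsPath (w : GWalk G) : Prop :=
  ∀ i ≤ w.len, ∀ j ≤ w.len, w.f i = w.f j → i = j

/-- The (interior) node at position `i` is a collider on the walk: both incident
edges carry arrowheads at it. -/
def ColliderAt (w : GWalk G) (i : ℕ) : Prop :=
  G.mark (w.f i) (w.f (i - 1)) = some Mark.arrow ∧
  G.mark (w.f i) (w.f (i + 1)) = some Mark.arrow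

end GWalk

namespace MixedGraph

variable {N : Type}

/-- `w` is an `(L,S)`-inducing walk: every non-endnode is in `L` or a collider, and
every collider lies in `Anc({first, last} ∪ S)`. -/
def InducingWalk (G : MixedGraph N) (L S : Set N) (w : GWalk G) : Prop :=
  (∀ i, 0 < i → i < w.len → w.f i ∈ L ∨ w.ColliderAt i) ∧
  (∀ i, 0 < i → i < w.len → w.ColliderAt i →
    w.f i ∈ G.ancSet ({w.first, w.last} ∪ S))

/-- There is an `(L,S)`-inducing walk from `a` to `b` in `G`. -/
def InducingWalkBtw (G : MixedGraph N) (L S : Set N) (a b : N) : Prop :=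
  ∃ w : GWalk G, w.first = a ∧ w.last = b ∧ G.InducingWalk L S w

/-- There is an `(L,S)`-inducing path from `a` to `b` in `G`. -/
def InducingPathBtw (G : MixedGraph N) (L S : Set N) (a b : N) : Prop :=
  ∃ w : GWalk G, w.IsPath ∧ w.first = a ∧ w.last = b ∧ G.InducingWalk L S w

/-- `G` is an iADMG: all edges directed or bidirected, no directed cycles, no
arrowheads at input nodes, and no edges between two input nodes. -/
def IsIADMG (G : MixedGraph N) : Prop :=
  G.WF ∧
  (∀ a b, G.adj a b → G.dir a b ∨ G.dir b a ∨ G.bidir a b) ∧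
  (∀ a b, G.dir a b → ¬ G.anc b a) ∧
  (∀ a ∈ G.inputs, ∀ b, G.mark a b ≠ some Mark.arrow) ∧
  (∀ a ∈ G.inputs, ∀ b ∈ G.inputs, ¬ G.adj a b)

/-- `G` is an iPAG. -/
def IsIPAG (G : MixedGraph N) : Prop :=
  G.WF ∧
  (∀ a ∈ G.inputs, ∀ b, G.mark a b ≠ some Mark.arrow) ∧
  (∀ a ∈ G.inputs, ∀ b ∈ G.inputs, ¬ G.adj a b) ∧
  (∀ a b, G.dir a b → ¬ G.anc b a) ∧
  (∀ a b, G.anc a b → ¬ G.bidir b a) ∧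
  (∀ a b c, G.mark b a = some Mark.arrow → ¬ G.undir b c) ∧
  (∀ a b, a ≠ b → a ∈ G.nodes → b ∈ G.nodes → ¬ G.adj a b →
    ¬ G.InducingPathBtw ∅ ∅ a b)

/-- `G` is an iMAG: an iPAG with no circle marks. -/
def IsIMAG (G : MixedGraph N) : Prop :=
  G.IsIPAG ∧ ∀ a b, G.mark a b ≠ some Mark.circle

/-- The visibility condition for a directed edge `a → b` of `G`: either `a` is an
input node, or some node `c` not adjacent to `b` satisfies `c *→ a`, or there is a
path `c *→ v₁ ↔ ⋯ ↔ v_{n−1} ↔ a` (`n ≥ 2`) with every `vᵢ` a parent of `b`. -/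
def VisibleCond (G : MixedGraph N) (a b : N) : Prop :=
  a ∈ G.inputs ∨
  ∃ c, c ≠ b ∧ ¬ G.adj c b ∧
    (G.mark a c = some Mark.arrow ∨
      ∃ w : GWalk G, w.IsPath ∧ 2 ≤ w.len ∧ w.first = c ∧ w.last = a ∧
        G.mark (w.f 1) (w.f 0) = some Mark.arrow ∧
        (∀ i, 1 ≤ i → i < w.len → G.bidir (w.f i) (w.f (i + 1))) ∧
        (∀ i, 1 ≤ i → i < w.len → G.dir (w.f i) b))

/-- `a → b` is a visible directed edge of `G`. -/
def VisibleDir (G : MixedGraph N) (a b : N) : Prop :=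
  G.dir a b ∧ G.VisibleCond a b

/-- `a` and `b` are in the same bucket of `G`: some path between them carries no
arrowhead mark on any of its edges. -/
def SameBucket (G : MixedGraph N) (a b : N) : Prop :=
  ∃ w : GWalk G, w.IsPath ∧ w.first = a ∧ w.last = b ∧
    ∀ i < w.len, G.mark (w.f i) (w.f (i + 1)) ≠ some Mark.arrow ∧
      G.mark (w.f (i + 1)) (w.f i) ≠ some Mark.arrow

end MixedGraph

/-- An isADMG: an iADMG together with its set `sel` of latent selection nodes.
The observed output nodes are `graph.outputs \ sel`. -/
structure SADMG (N : Type) where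
  graph : MixedGraph N
  sel : Set N

namespace SADMG

/-- Well-formedness of an isADMG. -/
def WF {N : Type} (A : SADMG N) : Prop :=
  A.graph.IsIADMG ∧ A.sel ⊆ A.graph.outputs

/-- The observed output nodes `O`. -/
def obs {N : Type} (A : SADMG N) : Set N := A.graph.outputs \ A.sel

end SADMG

/-- An ilsADMG: an iADMG together with its sets of latent output nodes and of
latent selection nodes.  The observed output nodes are the remaining outputs. -/
structure LSADMG (N : Type) where
  graph : MixedGraph N
  latent : Set N
  sel : Set N

namespace LSADMG

/-- Well-formedness of an ilsADMG. -/
def WF {N : Type} (A : LSADMG N) : Prop :=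
  A.graph.IsIADMG ∧ A.latent ⊆ A.graph.outputs ∧ A.sel ⊆ A.graph.outputs ∧
  Disjoint A.latent A.sel

/-- The observed output nodes `O`. -/
def obs {N : Type} (A : LSADMG N) : Set N := A.graph.outputs \ (A.latent ∪ A.sel)

end LSADMG

/-- An iPAG/iMAG `P` represents the isADMG `A`: nodes match; adjacency in `P`
corresponds exactly to `S`-inducing paths in `A` (with no edges inside the inputs);
arrowheads at `a` imply `a ∉ Anc_A({b} ∪ S)`; tails at `a` imply `a ∈ Anc_A({b} ∪ S)`. -/
def RepresentsS {N : Type} (P : MixedGraph N) (A : SADMG N) : Prop :=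
  P.inputs = A.graph.inputs ∧
  P.outputs = A.obs ∧
  (∀ a b, a ≠ b → a ∈ P.nodes → b ∈ P.nodes →
    (P.adj a b ↔
      (¬(a ∈ P.inputs ∧ b ∈ P.inputs) ∧ A.graph.InducingPathBtw ∅ A.sel a b))) ∧
  (∀ a b, P.mark a b = some Mark.arrow → a ∉ A.graph.ancSet ({b} ∪ A.sel)) ∧
  (∀ a b, P.mark a b = some Mark.tail → a ∈ A.graph.ancSet ({b} ∪ A.sel))

/-- An iPAG/iMAG `P` `(L,S)`-represents the ilsADMG `A`. -/
def RepresentsLS {N : Type} (P : MixedGraph N) (A : LSADMG N) : Prop :=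
  P.inputs = A.graph.inputs ∧
  P.outputs = A.obs ∧
  (∀ a b, a ≠ b → a ∈ P.nodes → b ∈ P.nodes →
    (P.adj a b ↔
      (¬(a ∈ P.inputs ∧ b ∈ P.inputs) ∧ A.graph.InducingPathBtw A.latent A.sel a b))) ∧
  (∀ a b, P.mark a b = some Mark.arrow → a ∉ A.graph.ancSet ({b} ∪ A.sel)) ∧
  (∀ a b, P.mark a b = some Mark.tail → a ∈ A.graph.ancSet ({b} ∪ A.sel))

/-- The explicit candidate for `MAG(A)` of an ilsADMG `A`: input nodes `I`, output
nodes `O`; distinct `a,b ∈ I ∪ O` adjacent iff `{a,b} ⊄ I` and there is an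
`(L,S)`-inducing path between them in `A`; the mark at `a` on each edge is a tail
if `a ∈ Anc_A({b} ∪ S)` and an arrowhead otherwise. -/
def magOfLS {N : Type} (A : LSADMG N) : MixedGraph N where
  inputs := A.graph.inputs
  outputs := A.obs
  mark := fun a b =>
    if a ≠ b ∧ a ∈ A.graph.inputs ∪ A.obs ∧ b ∈ A.graph.inputs ∪ A.obs ∧
        ¬(a ∈ A.graph.inputs ∧ b ∈ A.graph.inputs) ∧
        A.graph.InducingPathBtw A.latent A.sel a b then
      (if a ∈ A.graph.ancSet ({b} ∪ A.sel) then some Mark.tail else some Mark.arrow)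
    else none

/-- A walk is `C`-open (in a graph without circle marks): its endnodes are not in
`C`, no non-collider on it is in `C`, and every collider on it is in `Anc(C)`. -/
def COpen {N : Type} (H : MixedGraph N) (C : Set N) (w : GWalk H) : Prop :=
  w.first ∉ C ∧ w.last ∉ C ∧
  ∀ i, 0 < i → i < w.len →
    (¬ w.ColliderAt i → w.f i ∉ C) ∧ (w.ColliderAt i → w.f i ∈ H.ancSet C)

/-- `A` is id-separated from `B` given `C` in `H` (graphs without circle marks):
every path/walk from a node of `A` to a node of `B ∪ inputs` is not `C`-open. -/
def IdSepSimple {N : Type} (H : MixedGraph N) (A B C : Set N) : Prop :=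
  ∀ w : GWalk H, w.first ∈ A → w.last ∈ B ∪ H.inputs → ¬ COpen H C w

/-- A walk in a manipulated graph `H` (with set `DI` of regime input nodes) is
`C`-id-open. -/
def IdOpen {N : Type} (H : MixedGraph N) (DI C : Set N) (w : GWalk H) : Prop :=
  w.first ∉ C ∧ w.last ∉ C ∧
  ∀ i, 0 < i → i < w.len →
    (w.f i ∉ C ∧ (H.mark (w.f i) (w.f (i - 1)) = some Mark.tail ∨
        H.mark (w.f i) (w.f (i + 1)) = some Mark.tail)) ∨
    (w.f i ∉ C ∧ H.mark (w.f i) (w.f (i - 1)) = some Mark.circle ∧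
        H.mark (w.f i) (w.f (i + 1)) = some Mark.circle ∧
        ¬ H.adj (w.f (i - 1)) (w.f (i + 1))) ∨
    (w.ColliderAt i ∧ w.f (i - 1) ∉ DI ∧ w.f i ∉ DI ∧ w.f (i + 1) ∉ DI ∧
        w.f i ∈ H.ancSet C) ∨
    (w.ColliderAt i ∧ ¬(w.f (i - 1) ∉ DI ∧ w.f i ∉ DI ∧ w.f (i + 1) ∉ DI) ∧
        w.f i ∈ H.poAnSet (C ∩ H.outputs)) ∨
    (w.f (i - 1) ∈ DI ∧ H.mark (w.f i) (w.f (i - 1)) = some Mark.circle ∧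
        H.mark (w.f i) (w.f (i + 1)) = some Mark.arrow ∧
        w.f i ∈ H.poAnSet (C ∩ H.outputs)) ∨
    (w.f (i + 1) ∈ DI ∧ H.mark (w.f i) (w.f (i - 1)) = some Mark.arrow ∧
        H.mark (w.f i) (w.f (i + 1)) = some Mark.circle ∧
        w.f i ∈ H.poAnSet (C ∩ H.outputs))

/-- `A` is id-separated from `B` given `C` in the manipulated graph `H`, whose set
of regime input nodes is `DI`: every path/walk from a node of `A` to a node of
`B ∪ inputs` is not `C`-id-open. -/
def IdSep {N : Type} (H : MixedGraph N) (DI A B C : Set N) : Prop :=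
  ∀ w : GWalk H, w.first ∈ A → w.last ∈ B ∪ H.inputs → ¬ IdOpen H DI C w

/-- Hard manipulation `do(T)` of an isADMG-type graph: reclassify the nodes of `T`
as input nodes and delete every edge with an arrowhead at a node of `T`. -/
def admgHardManip {N : Type} (G : MixedGraph N) (T : Set N) : MixedGraph N where
  inputs := G.inputs ∪ (T ∩ G.outputs)
  outputs := G.outputs \ T
  mark := fun x y =>
    if (x ∈ T ∧ G.mark x y = some Mark.arrow) ∨
        (y ∈ T ∧ G.mark y x = some Mark.arrow) then none
    else G.mark x y

/-- Soft manipulation `do(I_D)` of an isADMG-type graph: add a fresh input node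
`I_d = Sum.inr d` and the directed edge `I_d → d` for each `d ∈ D`. -/
def admgSoftManip {N : Type} (G : MixedGraph N) (D : Set N) : MixedGraph (N ⊕ N) where
  inputs := Sum.inl '' G.inputs ∪ Sum.inr '' D
  outputs := Sum.inl '' G.outputs
  mark := fun x y =>
    match x, y with
    | Sum.inl a, Sum.inl b => G.mark a b
    | Sum.inr d, Sum.inl a => if d ∈ D ∧ a = d then some Mark.tail else none
    | Sum.inl a, Sum.inr d => if d ∈ D ∧ a = d then some Mark.arrow else none
    | Sum.inr _, Sum.inr _ => none

/-- Soft manipulation of an isADMG. -/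
def SADMG.softManip {N : Type} (A : SADMG N) (D : Set N) : SADMG (N ⊕ N) where
  graph := admgSoftManip A.graph D
  sel := Sum.inl '' A.sel

/-- Hard manipulation `do(T)` of an iMAG-type graph: input nodes `I ∪ (T ∩ V)`,
output nodes `V \ T`; delete all edges with an arrowhead at a node of `T \ I` and
all edges between two nodes of `T ∪ I`. -/
def magHardManip {N : Type} (G : MixedGraph N) (T : Set N) : MixedGraph N where
  inputs := G.inputs ∪ (T ∩ G.outputs)
  outputs := G.outputs \ T
  mark := fun x y =>
    if (x ∈ T ∧ x ∉ G.inputs ∧ G.mark x y = some Mark.arrow) ∨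
        (y ∈ T ∧ y ∉ G.inputs ∧ G.mark y x = some Mark.arrow) ∨
        ((x ∈ T ∨ x ∈ G.inputs) ∧ (y ∈ T ∨ y ∈ G.inputs)) then none
    else G.mark x y

/-- The mark at node `y` on the new edge between the regime node `I_a = Sum.inr a`
and `y` in the soft manipulation of an iMAG-type graph `G` over `N ⊕ N`
(`none` if there is no such edge): `I_a → a` if some edge of `G` has an arrowhead
at `a`; `I_a − a` if some undirected edge is at `a`; `I_a −∘ a` otherwise;
`I_a → b` for every output `b` with `a → b` invisible; `I_a − b` for every output
`b` with `a − b` in `G`. -/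
def magSoftTarget {N : Type} (G : MixedGraph (N ⊕ N)) (a : N) (y : N ⊕ N) : Option Mark :=
  if y = Sum.inl a then
    (if G.arrowAt (Sum.inl a) then some Mark.arrow
     else if ∃ c, G.undir (Sum.inl a) c then some Mark.tail
     else some Mark.circle)
  else if y ∈ G.outputs ∧ G.dir (Sum.inl a) y ∧ ¬ G.VisibleCond (Sum.inl a) y then
    some Mark.arrow
  else if y ∈ G.outputs ∧ G.undir (Sum.inl a) y then some Mark.tail
  else none

/-- The mark at node `y` on the new edge between the regime node `I_a = Sum.inr a`
and `y` in the soft manipulation of an iPAG-type graph `G` over `N ⊕ N`. -/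
def pagSoftTarget {N : Type} (G : MixedGraph (N ⊕ N)) (a : N) (y : N ⊕ N) : Option Mark :=
  if y = Sum.inl a then
    (if G.arrowAt (Sum.inl a) then some Mark.arrow
     else if ∃ c, G.undir (Sum.inl a) c then some Mark.tail
     else some Mark.circle)
  else if y ∈ G.outputs ∧ ((G.dir (Sum.inl a) y ∧ ¬ G.VisibleCond (Sum.inl a) y) ∨
      G.circArrow (Sum.inl a) y) then some Mark.arrow
  else if y ∈ G.outputs ∧ (G.undir (Sum.inl a) y ∨
      (G.circTail (Sum.inl a) y ∧ ∃ c, G.undir c y)) then some Mark.tail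
  else if y ∈ G.outputs ∧ (G.tailCirc (Sum.inl a) y ∨ G.circCirc (Sum.inl a) y ∨
      (G.circTail (Sum.inl a) y ∧ ¬ ∃ c, G.undir c y)) then some Mark.circle
  else none

/-- Generic soft-manipulation step on a graph over `N ⊕ N`: for each `a ∈ A` not
already an input, the regime node `I_a = Sum.inr a` is added as an input node,
with edges (and end marks) prescribed by `target`; the mark at `I_a` on each new
edge is a tail. -/
def softManipStep {N : Type}
    (target : MixedGraph (N ⊕ N) → N → (N ⊕ N) → Option Mark)
    (G : MixedGraph (N ⊕ N)) (A : Set N) : MixedGraph (N ⊕ N) where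
  inputs := G.inputs ∪ Sum.inr '' {a | a ∈ A ∧ Sum.inl a ∉ G.inputs}
  outputs := G.outputs
  mark := fun x y =>
    match x, y with
    | Sum.inr a, Sum.inr b =>
        if a ∈ A ∧ Sum.inl a ∉ G.inputs then
          (if (target G a (Sum.inr b)).isSome then some Mark.tail else none)
        else if b ∈ A ∧ Sum.inl b ∉ G.inputs then target G b (Sum.inr a)
        else G.mark x y
    | Sum.inr a, Sum.inl v =>
        if a ∈ A ∧ Sum.inl a ∉ G.inputs then
          (if (target G a (Sum.inl v)).isSome then some Mark.tail else none)
        else G.mark x y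
    | Sum.inl v, Sum.inr a =>
        if a ∈ A ∧ Sum.inl a ∉ G.inputs then target G a (Sum.inl v)
        else G.mark x y
    | Sum.inl _, Sum.inl _ => G.mark x y

/-- Soft-manipulation step for iMAG-type graphs over `N ⊕ N`. -/
def magSoftManipStep {N : Type} (G : MixedGraph (N ⊕ N)) (A : Set N) :
    MixedGraph (N ⊕ N) :=
  softManipStep magSoftTarget G A

/-- The soft-manipulated iMAG `M_{do(I_A)}`, over node type `N ⊕ N`. -/
def magSoftManip {N : Type} (M : MixedGraph N) (A : Set N) : MixedGraph (N ⊕ N) :=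
  magSoftManipStep M.sumInl A

/-- The soft-manipulated iPAG `P_{do(I_A)}`, over node type `N ⊕ N`. -/
def pagSoftManip {N : Type} (P : MixedGraph N) (A : Set N) : MixedGraph (N ⊕ N) :=
  softManipStep pagSoftTarget P.sumInl A

/-- Hard manipulation `do(T)` of an iPAG-type graph: as for iMAGs, but in addition
every remaining circle mark at a manipulated node is replaced by a tail. -/
def pagHardManip {N : Type} (G : MixedGraph N) (T : Set N) : MixedGraph N where
  inputs := G.inputs ∪ T
  outputs := G.outputs \ T
  mark := fun x y =>
    if (x ∈ T ∧ x ∉ G.inputs ∧ G.mark x y = some Mark.arrow) ∨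
        (y ∈ T ∧ y ∉ G.inputs ∧ G.mark y x = some Mark.arrow) ∨
        ((x ∈ T ∨ x ∈ G.inputs) ∧ (y ∈ T ∨ y ∈ G.inputs)) then none
    else if x ∈ T ∧ x ∉ G.inputs ∧ y ∈ G.outputs ∧ y ∉ T ∧
        G.mark x y = some Mark.circle then some Mark.tail
    else G.mark x y

/-- Orient all circle marks of `G` as tails. -/
def orientCirclesTails {N : Type} (G : MixedGraph N) : MixedGraph N :=
  { G with
    mark := fun x y =>
      (G.mark x y).map (fun m => if m = Mark.circle then Mark.tail else m) }

/-- There is a pc-connecting path from `a` to `b` in `G`: a single edge between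
`a` and `b` that is not a visible directed edge, or a path
`a *→ v₁ ↔ ⋯ ↔ v_{n−1} ←* b` (`n > 1`) none of whose edges is visible directed. -/
def PcConn {N : Type} (G : MixedGraph N) (a b : N) : Prop :=
  (G.adj a b ∧ ¬ G.VisibleDir a b ∧ ¬ G.VisibleDir b a) ∨
  (∃ w : GWalk G, w.IsPath ∧ 1 < w.len ∧ w.first = a ∧ w.last = b ∧
    G.mark (w.f 1) (w.f 0) = some Mark.arrow ∧
    G.mark (w.f (w.len - 1)) (w.f w.len) = some Mark.arrow ∧
    (∀ i, 1 ≤ i → i < w.len - 1 → G.bidir (w.f i) (w.f (i + 1))) ∧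
    (∀ i < w.len, ¬ G.VisibleDir (w.f i) (w.f (i + 1)) ∧
      ¬ G.VisibleDir (w.f (i + 1)) (w.f i)))

/-- The pc-component of `b` in `G`. -/
def pcSet {N : Type} (G : MixedGraph N) (b : N) : Set N := {a | PcConn G a b}

/-- The region of a set `B` in `G`: all nodes in the bucket of some node
pc-connected to a node of `B`. -/
def regionSet {N : Type} (G : MixedGraph N) (B : Set N) : Set N :=
  {a | ∃ b ∈ B, ∃ c, PcConn G c b ∧ G.SameBucket a c}

/-- `S` is a bucket of `G`. -/
def IsBucket {N : Type} (G : MixedGraph N) (S : Set N) : Prop :=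
  ∃ a ∈ G.nodes, S = {x | G.SameBucket x a}

/-- FCI rule R1 (closure form): if `k *→ j` with the edge between `j` and `i`
carrying a circle at `j`, `i` and `k` non-adjacent and `i` not an input node,
then that edge is `j → i`. -/
def FciR1 {N : Type} (P : MixedGraph N) : Prop :=
  ∀ i j k, P.mark j k = some Mark.arrow → ¬ P.adj i k → i ∉ P.inputs →
    P.mark j i = some Mark.circle → P.dir j i

/-- FCI rule R2 (closure form): if `i → j *→ k` or `i *→ j → k` with the edge
between `i` and `k` carrying a circle at `k`, then that edge has an arrowhead at `k`. -/
def FciR2 {N : Type} (P : MixedGraph N) : Prop :=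
  ∀ i j k, ((P.dir i j ∧ P.mark k j = some Mark.arrow) ∨
      (P.mark j i = some Mark.arrow ∧ P.dir j k)) →
    P.mark k i = some Mark.circle → P.mark k i = some Mark.arrow

/-- FCI rule R4 (closure form): for every discriminating path `⟨a,…,y,z⟩` for `y`,
the mark at `y` on the edge between `y` and `z` is not a circle. -/
def FciR4 {N : Type} (P : MixedGraph N) : Prop :=
  ∀ w : GWalk P, w.IsPath → 3 ≤ w.len → ¬ P.adj (w.f 0) (w.f w.len) →
    (∀ i, 0 < i → i < w.len - 1 → w.ColliderAt i ∧ P.dir (w.f i) (w.f w.len)) →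
    P.mark (w.f (w.len - 1)) (w.f w.len) ≠ some Mark.circle

/-- Property (P2) of iSOPAGs: no `a *→ b` together with `b −∘ c`, and no
`a *→ b` together with `b ∘− c`. -/
def SopagP2 {N : Type} (P : MixedGraph N) : Prop :=
  ∀ a b c, P.mark b a = some Mark.arrow → ¬ P.tailCirc b c ∧ ¬ P.circTail b c

/-- Property (P3) of iSOPAGs: if `a *→ b` and the edge between `b` and `c` has a
circle at `b`, then `a *→ c`. -/
def SopagP3 {N : Type} (P : MixedGraph N) : Prop :=
  ∀ a b c, P.mark b a = some Mark.arrow → P.mark b c = some Mark.circle →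
    P.mark c a = some Mark.arrow

/-- `P` is an iSOPAG: an iPAG representing some isADMG, closed under the FCI
orientation rules (R1, R2, R4), and satisfying (P2) and (P3). -/
def IsISOPAG {N : Type} (P : MixedGraph N) : Prop :=
  P.IsIPAG ∧ (∃ A : SADMG N, A.WF ∧ RepresentsS P A) ∧
  FciR1 P ∧ FciR2 P ∧ FciR4 P ∧ SopagP2 P ∧ SopagP3 P


namespace S0

open MixedGraph GWalk

variable {N : Type}

section Basic
variable {G : MixedGraph N} {L S T : Set N}

lemma mem_ancSet_of_anc {x y : N} (h : G.anc x y) (hy : y ∈ G.ancSet T) :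
    x ∈ G.ancSet T := by
  obtain ⟨s, hs, hanc⟩ := hy
  exact ⟨s, hs, h.trans hanc⟩

lemma self_mem_ancSet {x : N} (hx : x ∈ T) : x ∈ G.ancSet T := ⟨x, hx, .refl⟩

lemma ancSet_trans1 {x y z : N} (hx : x ∈ G.ancSet ({y} ∪ S)) (hy : y ∈ G.ancSet ({z} ∪ S)) :
    x ∈ G.ancSet ({z} ∪ S) := by
  obtain ⟨s, hs, hanc⟩ := hx
  rcases hs with hs | hs
  · rcases hs
    exact mem_ancSet_of_anc hanc hy
  · exact ⟨s, Or.inr hs, hanc⟩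

lemma ancSet_pair_trans {x u v a b : N} (hx : x ∈ G.ancSet ({u, v} ∪ S))
    (hu : u ∈ G.ancSet ({a, b} ∪ S)) (hv : v ∈ G.ancSet ({a, b} ∪ S)) :
    x ∈ G.ancSet ({a, b} ∪ S) := by
  obtain ⟨s, hs, hanc⟩ := hx
  rcases hs with (hs | hs) | hs
  · rcases hs; exact mem_ancSet_of_anc hanc hu
  · rcases hs; exact mem_ancSet_of_anc hanc hv
  · exact ⟨s, Or.inr hs, hanc⟩

lemma anc_antisymm (hacyc : ∀ a b, G.dir a b → ¬ G.anc b a) {a b : N}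
    (h1 : G.anc a b) (h2 : G.anc b a) : a = b := by
  rcases Relation.ReflTransGen.cases_head h1 with h | ⟨c, hac, hcb⟩
  · exact h
  · exact absurd (Relation.ReflTransGen.trans hcb h2) (hacyc a c hac)

lemma dir_of_not_arrow (htri : ∀ a b, G.adj a b → G.dir a b ∨ G.dir b a ∨ G.bidir a b)
    {a b : N} (hadj : G.adj a b) (h : G.mark a b ≠ some Mark.arrow) : G.dir a b := by
  rcases htri a b hadj with h' | h' | h'
  · exact h'
  · exact absurd h'.2 h
  · exact absurd h'.1 h

/-- Reversal of a walk. -/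
def rev (w : GWalk G) (hsym : ∀ a b, (G.mark a b).isSome → (G.mark b a).isSome) : GWalk G where
  len := w.len
  f := fun k => w.f (w.len - k)
  hadj := by
    intro i hi
    have h1 : w.len - i - 1 < w.len := by omega
    have h2 : (w.len - i - 1) + 1 = w.len - i := by omega
    have h3 := w.hadj _ h1
    rw [h2] at h3
    have h4 : (G.mark (w.f (w.len - i)) (w.f (w.len - i - 1))).isSome := hsym _ _ h3
    have h5 : w.len - (i + 1) = w.len - i - 1 := by omega
    show (G.mark (w.f (w.len - i)) (w.f (w.len - (i + 1)))).isSome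
    rw [h5]; exact h4

variable {hsym : ∀ a b, (G.mark a b).isSome → (G.mark b a).isSome}

@[simp] lemma rev_len (w : GWalk G) : (rev w hsym).len = w.len := rfl

@[simp] lemma rev_f (w : GWalk G) (k : ℕ) : (rev w hsym).f k = w.f (w.len - k) := rfl

lemma rev_first (w : GWalk G) : (rev w hsym).first = w.last := by
  simp [GWalk.first, GWalk.last, rev]

lemma rev_last (w : GWalk G) : (rev w hsym).last = w.first := by
  simp [GWalk.first, GWalk.last, rev]

lemma rev_isPath {w : GWalk G} (hp : w.IsPath) : (rev w hsym).IsPath := by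
  intro i hi j hj hf
  simp only [rev_len] at hi hj
  simp only [rev_f] at hf
  have := hp _ (by omega : w.len - i ≤ w.len) _ (by omega : w.len - j ≤ w.len) hf
  omega

lemma rev_inducing {w : GWalk G} (hw : G.InducingWalk L S w) :
    G.InducingWalk L S (rev w hsym) := by
  constructor
  · intro i h0 hlen
    simp only [rev_len] at hlen
    rcases hw.1 (w.len - i) (by omega) (by omega) with h | h
    · left; simpa using h
    · right
      unfold GWalk.ColliderAt at h ⊢
      simp only [rev_f]
      have e1 : w.len - (i - 1) = (w.len - i) + 1 := by omega
      have e2 : w.len - (i + 1) = (w.len - i) - 1 := by omega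
      rw [e1, e2]
      exact ⟨h.2, h.1⟩
  · intro i h0 hlen hc
    simp only [rev_len] at hlen
    have hc' : w.ColliderAt (w.len - i) := by
      unfold GWalk.ColliderAt at hc ⊢
      simp only [rev_f] at hc
      have e1 : w.len - (i - 1) = (w.len - i) + 1 := by omega
      have e2 : w.len - (i + 1) = (w.len - i) - 1 := by omega
      rw [e1, e2] at hc
      exact ⟨hc.2, hc.1⟩
    have h := hw.2 (w.len - i) (by omega) (by omega) hc'
    have hset : ({(rev w hsym).first, (rev w hsym).last} : Set N) = {w.first, w.last} := by
      rw [rev_first, rev_last, Set.pair_comm]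
    simpa only [rev_f, hset] using h

/-- Directed chase along an inducing walk: weak form. -/
lemma chaseWeak (htri : ∀ a b, G.adj a b → G.dir a b ∨ G.dir b a ∨ G.bidir a b)
    {w : GWalk G} (hw : G.InducingWalk L S w) :
    ∀ n i, w.len - i ≤ n → i < w.len → G.dir (w.f i) (w.f (i + 1)) →
      w.f i ∈ G.ancSet ({w.first, w.last} ∪ S) := by
  intro n
  induction n with
  | zero => intro i h1 h2 _; omega
  | succ n ih =>
    intro i h1 h2 hdir
    by_cases hi : i + 1 = w.len
    · refine ⟨w.last, Or.inl (Or.inr rfl), ?_⟩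
      show G.anc (w.f i) w.last
      rw [GWalk.last, ← hi]
      exact Relation.ReflTransGen.single hdir
    · have hlt : i + 1 < w.len := by omega
      by_cases hcol : w.ColliderAt (i + 1)
      · exact mem_ancSet_of_anc (Relation.ReflTransGen.single hdir)
          (hw.2 (i + 1) (by omega) hlt hcol)
      · have hmark : G.mark (w.f (i + 1)) (w.f i) = some Mark.arrow := hdir.2
        have hnot : G.mark (w.f (i + 1)) (w.f (i + 1 + 1)) ≠ some Mark.arrow := by
          intro h
          exact hcol ⟨by simpa using hmark, h⟩
        have hdir' : G.dir (w.f (i + 1)) (w.f (i + 1 + 1)) :=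
          dir_of_not_arrow htri (w.hadj _ hlt) hnot
        exact mem_ancSet_of_anc (Relation.ReflTransGen.single hdir)
          (ih (i + 1) (by omega) hlt hdir')

/-- Directed chase along an inducing path: sharp form. -/
lemma chaseSharp (htri : ∀ a b, G.adj a b → G.dir a b ∨ G.dir b a ∨ G.bidir a b)
    (hacyc : ∀ a b, G.dir a b → ¬ G.anc b a)
    {w : GWalk G} (hp : w.IsPath) (hw : G.InducingWalk L S w) :
    ∀ n i, w.len - i ≤ n → i < w.len → G.dir (w.f i) (w.f (i + 1)) →
      G.anc (w.f 0) (w.f i) → w.f 0 ∈ G.ancSet ({w.last} ∪ S) := by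
  intro n
  induction n with
  | zero => intro i h1 h2 _ _; omega
  | succ n ih =>
    intro i h1 h2 hdir hacc
    have hacc' : G.anc (w.f 0) (w.f (i + 1)) := hacc.tail hdir
    by_cases hi : i + 1 = w.len
    · exact ⟨w.last, Or.inl rfl, by rw [GWalk.last, ← hi]; exact hacc'⟩
    · have hlt : i + 1 < w.len := by omega
      by_cases hcol : w.ColliderAt (i + 1)
      · obtain ⟨s, hs, hanc⟩ := hw.2 (i + 1) (by omega) hlt hcol
        rcases hs with (hs | hs) | hs
        · rcases hs
          exfalso
          have : w.f (i + 1) = w.f 0 := anc_antisymm hacyc hanc hacc'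
          have := hp (i + 1) (by omega) 0 (by omega) this
          omega
        · rcases hs
          exact ⟨w.last, Or.inl rfl, hacc'.trans hanc⟩
        · exact ⟨s, Or.inr hs, hacc'.trans hanc⟩
      · have hmark : G.mark (w.f (i + 1)) (w.f i) = some Mark.arrow := hdir.2
        have hnot : G.mark (w.f (i + 1)) (w.f (i + 1 + 1)) ≠ some Mark.arrow := by
          intro h
          exact hcol ⟨by simpa using hmark, h⟩
        have hdir' : G.dir (w.f (i + 1)) (w.f (i + 1 + 1)) :=
          dir_of_not_arrow htri (w.hadj _ hlt) hnot
        exact ih (i + 1) (by omega) hlt hdir' hacc'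

/-- First edge of an inducing path out of a non-ancestor has an arrowhead at the start. -/
lemma firstArrow (htri : ∀ a b, G.adj a b → G.dir a b ∨ G.dir b a ∨ G.bidir a b)
    (hacyc : ∀ a b, G.dir a b → ¬ G.anc b a)
    {w : GWalk G} (hp : w.IsPath) (hw : G.InducingWalk L S w) (hlen : 0 < w.len)
    (hnanc : w.f 0 ∉ G.ancSet ({w.last} ∪ S)) :
    G.mark (w.f 0) (w.f 1) = some Mark.arrow := by
  by_contra h
  have hdir := dir_of_not_arrow htri (w.hadj 0 hlen) h
  exact hnanc (chaseSharp htri hacyc hp hw w.len 0 (by omega) hlen hdir .refl)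

end Basic

end S0


namespace S0

open MixedGraph GWalk

variable {N : Type}

section Shorten
variable {G : MixedGraph N} {L S : Set N}

/-- Splice a walk at a repeated node. -/
def splice (w : GWalk G) (i j : ℕ) (hij : i < j) (hj : j ≤ w.len) (heq : w.f i = w.f j) :
    GWalk G where
  len := w.len - (j - i)
  f := fun k => if k ≤ i then w.f k else w.f (k + (j - i))
  hadj := by
    intro k hk
    show G.adj (if k ≤ i then w.f k else w.f (k + (j - i)))
      (if k + 1 ≤ i then w.f (k + 1) else w.f (k + 1 + (j - i)))
    by_cases h1 : k + 1 ≤ i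
    · rw [if_pos (by omega : k ≤ i), if_pos h1]
      exact w.hadj k (by omega)
    · have hge : ∀ m, i ≤ m → (if m ≤ i then w.f m else w.f (m + (j - i))) = w.f (m + (j - i)) := by
        intro m hm
        by_cases h : m ≤ i
        · have hmi : m = i := by omega
          rw [if_pos h, hmi, (by omega : i + (j - i) = j), heq]
        · rw [if_neg h]
      rw [hge k (by omega), hge (k + 1) (by omega)]
      have : k + (j - i) + 1 = k + 1 + (j - i) := by omega
      rw [← this]
      exact w.hadj _ (by omega)

lemma splice_f_le (w : GWalk G) {i j : ℕ} (hij : i < j) (hj : j ≤ w.len) (heq : w.f i = w.f j)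
    {k : ℕ} (hk : k ≤ i) : (splice w i j hij hj heq).f k = w.f k := if_pos hk

lemma splice_f_ge (w : GWalk G) {i j : ℕ} (hij : i < j) (hj : j ≤ w.len) (heq : w.f i = w.f j)
    {k : ℕ} (hk : i ≤ k) : (splice w i j hij hj heq).f k = w.f (k + (j - i)) := by
  show (if k ≤ i then w.f k else w.f (k + (j - i))) = _
  by_cases h : k ≤ i
  · have hki : k = i := by omega
    rw [if_pos h, hki, (by omega : i + (j - i) = j), heq]
  · rw [if_neg h]

lemma splice_first (w : GWalk G) {i j : ℕ} (hij : i < j) (hj : j ≤ w.len) (heq : w.f i = w.f j) :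
    (splice w i j hij hj heq).first = w.first := splice_f_le w hij hj heq (Nat.zero_le _)

lemma splice_last (w : GWalk G) {i j : ℕ} (hij : i < j) (hj : j ≤ w.len) (heq : w.f i = w.f j) :
    (splice w i j hij hj heq).last = w.last := by
  show (splice w i j hij hj heq).f (w.len - (j - i)) = w.f w.len
  rw [splice_f_ge w hij hj heq (by omega)]
  congr 1
  omega

lemma splice_inducing (htri : ∀ a b, G.adj a b → G.dir a b ∨ G.dir b a ∨ G.bidir a b)
    {w : GWalk G} (hw : G.InducingWalk L S w)
    {i j : ℕ} (hij : i < j) (hj : j ≤ w.len) (heq : w.f i = w.f j) :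
    G.InducingWalk L S (splice w i j hij hj heq) := by
  set w' := splice w i j hij hj heq with hw'
  have hlen' : w'.len = w.len - (j - i) := rfl
  have hfle : ∀ k, k ≤ i → w'.f k = w.f k := fun k hk => splice_f_le w hij hj heq hk
  have hfge : ∀ k, i ≤ k → w'.f k = w.f (k + (j - i)) := fun k hk => splice_f_ge w hij hj heq hk
  have hends : ({w'.first, w'.last} : Set N) = {w.first, w.last} := by
    rw [splice_first, splice_last]
  -- collider transfer for k < i
  have hcol_lt : ∀ k, 0 < k → k < i → (w'.ColliderAt k ↔ w.ColliderAt k) := by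
    intro k h0 hk
    unfold GWalk.ColliderAt
    rw [hfle k (by omega), hfle (k - 1) (by omega), hfle (k + 1) (by omega)]
  -- collider transfer for k > i
  have hcol_gt : ∀ k, i < k → k < w'.len → (w'.ColliderAt k ↔ w.ColliderAt (k + (j - i))) := by
    intro k hk hkl
    unfold GWalk.ColliderAt
    rw [hfge k (by omega), hfge (k - 1) (by omega), hfge (k + 1) (by omega)]
    have e1 : k - 1 + (j - i) = k + (j - i) - 1 := by omega
    have e2 : k + 1 + (j - i) = k + (j - i) + 1 := by omega
    rw [e1, e2]
  constructor
  · intro k h0 hk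
    rcases lt_trichotomy k i with hki | hki | hki
    · rcases hw.1 k h0 (by omega) with h | h
      · left; rwa [hfle k (by omega)]
      · right; rwa [hcol_lt k h0 hki]
    · -- junction
      subst hki
      rw [hfle k le_rfl]
      by_cases hL : w.f k ∈ L
      · exact Or.inl hL
      · right
        have h1 := (hw.1 k h0 (by omega)).resolve_left hL
        have h2 := (hw.1 j (by omega) (by omega)).resolve_left (heq ▸ hL)
        unfold GWalk.ColliderAt at h1 h2 ⊢
        rw [hfle k le_rfl, hfle (k - 1) (by omega), hfge (k + 1) (by omega)]
        have : k + 1 + (j - k) = j + 1 := by omega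
        rw [this]
        exact ⟨h1.1, heq ▸ h2.2⟩
    · rcases hw.1 (k + (j - i)) (by omega) (by omega) with h | h
      · left; rwa [hfge k (by omega)]
      · right; rwa [hcol_gt k hki hk]
  · intro k h0 hk hc
    rw [hends]
    rcases lt_trichotomy k i with hki | hki | hki
    · have := hw.2 k h0 (by omega) ((hcol_lt k h0 hki).mp hc)
      rwa [hfle k (by omega)]
    · subst hki
      rw [hfle k le_rfl]
      by_cases hcw : w.ColliderAt k
      · exact hw.2 k h0 (by omega) hcw
      · -- not a collider at the old position i: chase
        have harrow : G.mark (w.f k) (w.f (k - 1)) = some Mark.arrow := by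
          have := hc.1
          rwa [hfle k le_rfl, hfle (k - 1) (by omega)] at this
        have hnot : G.mark (w.f k) (w.f (k + 1)) ≠ some Mark.arrow := by
          intro h
          exact hcw ⟨harrow, h⟩
        have hdir : G.dir (w.f k) (w.f (k + 1)) :=
          dir_of_not_arrow htri (w.hadj k (by omega)) hnot
        exact chaseWeak htri hw w.len k (by omega) (by omega) hdir
    · have := hw.2 (k + (j - i)) (by omega) (by omega) ((hcol_gt k hki hk).mp hc)
      rwa [hfge k (by omega)]

/-- Inducing walks can be shortened to inducing paths. -/
lemma shorten (htri : ∀ a b, G.adj a b → G.dir a b ∨ G.dir b a ∨ G.bidir a b) :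
    ∀ n (w : GWalk G), w.len ≤ n → G.InducingWalk L S w →
      ∃ w' : GWalk G, w'.IsPath ∧ w'.first = w.first ∧ w'.last = w.last ∧
        G.InducingWalk L S w' := by
  intro n
  induction n with
  | zero =>
    intro w hlen hw
    refine ⟨w, ?_, rfl, rfl, hw⟩
    intro i hi j hj _
    omega
  | succ n ih =>
    intro w hlen hw
    by_cases hp : w.IsPath
    · exact ⟨w, hp, rfl, rfl, hw⟩
    · simp only [GWalk.IsPath, not_forall] at hp
      obtain ⟨i, hi, j, hj, heq, hne⟩ := hp
      rcases lt_or_gt_of_ne hne with hij | hij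
      · obtain ⟨w', h1, h2, h3, h4⟩ := ih (splice w i j hij hj heq)
          (by show w.len - (j - i) ≤ n; omega) (splice_inducing htri hw hij hj heq)
        exact ⟨w', h1, h2.trans (splice_first w hij hj heq),
          h3.trans (splice_last w hij hj heq), h4⟩
      · obtain ⟨w', h1, h2, h3, h4⟩ := ih (splice w j i hij hi heq.symm)
          (by show w.len - (i - j) ≤ n; omega) (splice_inducing htri hw hij hi heq.symm)
        exact ⟨w', h1, h2.trans (splice_first w hij hi heq.symm),
          h3.trans (splice_last w hij hi heq.symm), h4⟩

/-- Concatenation of two walks. -/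
def cat (w1 w2 : GWalk G) (h : w1.last = w2.first) : GWalk G where
  len := w1.len + w2.len
  f := fun k => if k ≤ w1.len then w1.f k else w2.f (k - w1.len)
  hadj := by
    intro k hk
    show G.adj (if k ≤ w1.len then w1.f k else w2.f (k - w1.len))
      (if k + 1 ≤ w1.len then w1.f (k + 1) else w2.f (k + 1 - w1.len))
    have hge : ∀ m, w1.len ≤ m →
        (if m ≤ w1.len then w1.f m else w2.f (m - w1.len)) = w2.f (m - w1.len) := by
      intro m hm
      by_cases hm' : m ≤ w1.len
      · have hme : m = w1.len := by omega
        rw [if_pos hm', hme, Nat.sub_self]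
        exact h
      · rw [if_neg hm']
    by_cases h1 : k + 1 ≤ w1.len
    · rw [if_pos (by omega : k ≤ w1.len), if_pos h1]
      exact w1.hadj k (by omega)
    · rw [hge k (by omega), hge (k + 1) (by omega)]
      have : k + 1 - w1.len = (k - w1.len) + 1 := by omega
      rw [this]
      exact w2.hadj _ (by omega)

lemma cat_f_le {w1 w2 : GWalk G} (h : w1.last = w2.first) {k : ℕ} (hk : k ≤ w1.len) :
    (cat w1 w2 h).f k = w1.f k := if_pos hk

lemma cat_f_ge {w1 w2 : GWalk G} (h : w1.last = w2.first) {k : ℕ} (hk : w1.len ≤ k) :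
    (cat w1 w2 h).f k = w2.f (k - w1.len) := by
  show (if k ≤ w1.len then w1.f k else w2.f (k - w1.len)) = _
  by_cases hk' : k ≤ w1.len
  · have : k = w1.len := by omega
    subst this
    rw [if_pos le_rfl, Nat.sub_self]
    exact h
  · rw [if_neg hk']

lemma cat_len {w1 w2 : GWalk G} (h : w1.last = w2.first) :
    (cat w1 w2 h).len = w1.len + w2.len := rfl

lemma cat_first {w1 w2 : GWalk G} (h : w1.last = w2.first) :
    (cat w1 w2 h).first = w1.first := cat_f_le h (Nat.zero_le _)

lemma cat_last {w1 w2 : GWalk G} (h : w1.last = w2.first) :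
    (cat w1 w2 h).last = w2.last := by
  show (cat w1 w2 h).f (w1.len + w2.len) = w2.f w2.len
  rw [cat_f_ge h (by omega)]
  congr 1
  omega

end Shorten

end S0


namespace S0

open MixedGraph GWalk

variable {N : Type}

lemma MixedGraph.ext' {G H : MixedGraph N} (h1 : G.inputs = H.inputs)
    (h2 : G.outputs = H.outputs) (h3 : G.mark = H.mark) : G = H := by
  cases G; cases H; simp_all

section Mag
variable (A : LSADMG N)

/-- The adjacency condition of `magOfLS`. -/
def C (a b : N) : Prop :=
  a ≠ b ∧ a ∈ A.graph.inputs ∪ A.obs ∧ b ∈ A.graph.inputs ∪ A.obs ∧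
    ¬(a ∈ A.graph.inputs ∧ b ∈ A.graph.inputs) ∧
    A.graph.InducingPathBtw A.latent A.sel a b

lemma mag_mark_def (a b : N) : (magOfLS A).mark a b =
    if C A a b then
      (if a ∈ A.graph.ancSet ({b} ∪ A.sel) then some Mark.tail else some Mark.arrow)
    else none := by
  show (if _ ∧ _ ∧ _ ∧ _ ∧ _ then _ else none) = _
  unfold C
  split_ifs <;> rfl

lemma mag_adj_iff (a b : N) : (magOfLS A).adj a b ↔ C A a b := by
  unfold MixedGraph.adj
  rw [mag_mark_def]
  split_ifs with h1 h2 <;> simp [h1]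

lemma mag_arrow_iff (a b : N) : (magOfLS A).mark a b = some Mark.arrow ↔
    C A a b ∧ a ∉ A.graph.ancSet ({b} ∪ A.sel) := by
  rw [mag_mark_def]
  split_ifs with h1 h2 <;> simp_all

lemma mag_tail_iff (a b : N) : (magOfLS A).mark a b = some Mark.tail ↔
    C A a b ∧ a ∈ A.graph.ancSet ({b} ∪ A.sel) := by
  rw [mag_mark_def]
  split_ifs with h1 h2 <;> simp_all

lemma mag_anc {x y : N} (h : (magOfLS A).anc x y) :
    x ∈ A.graph.ancSet ({y} ∪ A.sel) := by
  induction h using Relation.ReflTransGen.head_induction_on with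
  | refl => exact self_mem_ancSet (Or.inl rfl)
  | head hd _ ih => exact ancSet_trans1 ((mag_tail_iff A _ _).mp hd.1).2 ih

lemma mag_no_arrow_input (hA : A.WF) {a : N} (ha : a ∈ A.graph.inputs) (b : N) :
    (magOfLS A).mark a b ≠ some Mark.arrow := by
  intro harr
  obtain ⟨hC, hnanc⟩ := (mag_arrow_iff A a b).mp harr
  obtain ⟨p, hpth, hfirst, hlast, hind⟩ := hC.2.2.2.2
  have htri := hA.1.2.1
  have hacyc := hA.1.2.2.1
  have hlen : 0 < p.len := by
    rcases Nat.eq_zero_or_pos p.len with h | h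
    · exact absurd (by rw [← hfirst, ← hlast, GWalk.first, GWalk.last, h]) hC.1
    · exact h
  have hdir : A.graph.dir (p.f 0) (p.f 1) := by
    rcases htri _ _ (p.hadj 0 hlen) with h | h | h
    · exact h
    · exact absurd h.2 (by rw [show p.f 0 = a from hfirst]; exact hA.1.2.2.2.1 a ha _)
    · exact absurd h.1 (by rw [show p.f 0 = a from hfirst]; exact hA.1.2.2.2.1 a ha _)
  have := chaseSharp htri hacyc hpth hind p.len 0 (by omega) hlen hdir .refl
  rw [show p.f 0 = a from hfirst, hlast] at this
  exact hnanc this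

lemma mag_no_circle (a b : N) : (magOfLS A).mark a b ≠ some Mark.circle := by
  rw [mag_mark_def]
  split_ifs <;> simp

/-- Maximality: no inducing path in `magOfLS A` between non-adjacent nodes. -/
lemma mag_maximal (hA : A.WF) {a b : N} (hab : a ≠ b)
    (ha : a ∈ (magOfLS A).nodes) (hb : b ∈ (magOfLS A).nodes)
    (hnadj : ¬ (magOfLS A).adj a b) : ¬ (magOfLS A).InducingPathBtw ∅ ∅ a b := by
  rintro ⟨w, hp, hfirst, hlast, hw⟩
  have hWF := hA.1.1
  have htri := hA.1.2.1
  have hacyc := hA.1.2.2.1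
  have hsym := hWF.2.2.2.1
  have hlen1 : 1 ≤ w.len := by
    rcases Nat.eq_zero_or_pos w.len with h | h
    · exact absurd (by rw [← hfirst, ← hlast, GWalk.first, GWalk.last, h]) hab
    · exact h
  have hlen2 : 2 ≤ w.len := by
    rcases Nat.lt_or_ge w.len 2 with h | h
    · exfalso
      have h1 : w.len = 1 := by omega
      have h01 := w.hadj 0 (by omega)
      have e0 : w.f 0 = a := hfirst
      have e1 : w.f 1 = b := by rw [← hlast]; show w.f 1 = w.f w.len; rw [h1]
      rw [e0, e1] at h01
      exact hnadj h01
    · exact h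
  have hcol : ∀ k, 0 < k → k < w.len → w.ColliderAt k := fun k h0 hk =>
    (hw.1 k h0 hk).resolve_left (Set.notMem_empty _)
  have hsab : ∀ s, s ∈ ({w.first, w.last} ∪ (∅ : Set N)) → s = a ∨ s = b := by
    intro s hs
    rcases hs with (hs | hs) | hs
    · left; rw [← hfirst]; exact hs
    · right; rw [← hlast]; exact hs
    · exact absurd hs (Set.notMem_empty s)
  have hmemI : ∀ k, 0 < k → k < w.len → w.f k ∈ A.graph.ancSet ({a, b} ∪ A.sel) := by
    intro k h0 hk
    obtain ⟨s, hs, hanc⟩ := hw.2 k h0 hk (hcol k h0 hk)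
    obtain ⟨t, ht, hanc'⟩ := mag_anc A hanc
    rcases ht with ht | ht
    · rcases ht
      rcases hsab s hs with h | h <;> subst h
      · exact ⟨s, Or.inl (Or.inl rfl), hanc'⟩
      · exact ⟨s, Or.inl (Or.inr rfl), hanc'⟩
    · exact ⟨t, Or.inr ht, hanc'⟩
  by_cases hII : a ∈ A.graph.inputs ∧ b ∈ A.graph.inputs
  · -- both endpoints inputs: impossible
    have hc1 := hcol 1 one_pos (by omega)
    obtain ⟨s, hs, hanc⟩ := hw.2 1 one_pos (by omega) hc1
    have hnoarr : ∀ y, (magOfLS A).mark s y ≠ some Mark.arrow := by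
      rcases hsab s hs with h | h <;> subst h
      · exact mag_no_arrow_input A hA hII.1
      · exact mag_no_arrow_input A hA hII.2
    have heq1 : w.f 1 = s := by
      rcases Relation.ReflTransGen.cases_tail hanc with h | ⟨c, _, hd⟩
      · exact h.symm
      · exact absurd hd.2 (hnoarr c)
    rcases hsab s hs with h | h <;> subst h
    · have : (1 : ℕ) = 0 := hp 1 (by omega) 0 (by omega) (heq1.trans hfirst.symm)
      omega
    · have : (1 : ℕ) = w.len := hp 1 (by omega) w.len le_rfl (heq1.trans hlast.symm)
      omega
  · -- main case: build an inducing walk in A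
    have hedge : ∀ k, k < w.len →
        A.graph.InducingPathBtw A.latent A.sel (w.f k) (w.f (k + 1)) :=
      fun k hk => ((mag_adj_iff A _ _).mp (w.hadj k hk)).2.2.2.2
    have harrL : ∀ k, 0 < k → k < w.len →
        w.f k ∉ A.graph.ancSet ({w.f (k - 1)} ∪ A.sel) :=
      fun k h0 hk => ((mag_arrow_iff A _ _).mp (hcol k h0 hk).1).2
    have harrR : ∀ k, 0 < k → k < w.len →
        w.f k ∉ A.graph.ancSet ({w.f (k + 1)} ∪ A.sel) :=
      fun k h0 hk => ((mag_arrow_iff A _ _).mp (hcol k h0 hk).2).2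
    have hmem : ∀ k, k ≤ w.len → w.f k ∈ A.graph.ancSet ({a, b} ∪ A.sel) := by
      intro k hk
      rcases Nat.eq_zero_or_pos k with h | h
      · subst h
        rw [show w.f 0 = a from hfirst]
        exact self_mem_ancSet (Or.inl (Or.inl rfl))
      · rcases Nat.lt_or_ge k w.len with h' | h'
        · exact hmemI k h h'
        · have hke : k = w.len := by omega
          subst hke
          rw [show w.f w.len = b from hlast]
          exact self_mem_ancSet (Or.inl (Or.inr rfl))
    have hla : ∀ (p : GWalk A.graph), p.IsPath → A.graph.InducingWalk A.latent A.sel p →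
        0 < p.len → p.last ∉ A.graph.ancSet ({p.first} ∪ A.sel) →
        A.graph.mark p.last (p.f (p.len - 1)) = some Mark.arrow := by
      intro p h1 h2 h3 h4
      have h5 := firstArrow htri hacyc (rev_isPath (hsym := hsym) h1)
        (rev_inducing (hsym := hsym) h2) (by simpa using h3)
        (by rw [show (rev p hsym).f 0 = p.last from by simp [GWalk.last], rev_last]; exact h4)
      rw [show (rev p hsym).f 0 = p.last from by simp [GWalk.last],
        show (rev p hsym).f 1 = p.f (p.len - 1) from rfl] at h5
      exact h5
    have hbuild : ∀ m, 1 ≤ m → m ≤ w.len → ∃ W : GWalk A.graph, W.first = a ∧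
        W.last = w.f m ∧ 0 < W.len ∧
        (m < w.len → A.graph.mark (w.f m) (W.f (W.len - 1)) = some Mark.arrow) ∧
        (∀ k, 0 < k → k < W.len → W.f k ∈ A.latent ∨ W.ColliderAt k) ∧
        (∀ k, 0 < k → k < W.len → W.ColliderAt k →
          W.f k ∈ A.graph.ancSet ({a, b} ∪ A.sel)) := by
      intro m
      induction m with
      | zero => omega
      | succ m ih =>
        intro _ hm1
        obtain ⟨p, hpth, hpf, hpl, hpi⟩ := hedge m (by omega)
        have hplen : 0 < p.len := by
          rcases Nat.eq_zero_or_pos p.len with h | h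
          · exfalso
            have he : w.f m = w.f (m + 1) := by
              rw [← hpf, ← hpl, GWalk.first, GWalk.last, h]
            have := hp m (by omega) (m + 1) (by omega) he
            omega
          · exact h
        have hcolp : ∀ k, 0 < k → k < p.len → p.ColliderAt k →
            p.f k ∈ A.graph.ancSet ({a, b} ∪ A.sel) := by
          intro k h0 hk hc
          refine ancSet_pair_trans (hpi.2 k h0 hk hc) ?_ ?_
          · rw [hpf]; exact hmem m (by omega)
          · rw [hpl]; exact hmem (m + 1) (by omega)
        rcases Nat.eq_zero_or_pos m with hm0 | hm0
        · -- base case: m = 0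
          subst hm0
          refine ⟨p, by rw [GWalk.first, ← hfirst]; exact hpf, hpl, hplen, ?_, hpi.1, hcolp⟩
          intro hlt
          have h4 : p.last ∉ A.graph.ancSet ({p.first} ∪ A.sel) := by
            rw [hpl, hpf]
            simpa using harrL 1 one_pos hlt
          have h5 := hla p hpth hpi hplen h4
          rwa [hpl] at h5
        · -- inductive step
          obtain ⟨W, hWf, hWl, hWlen, hWarr, hWint, hWcol⟩ := ih hm0 (by omega)
          have hjoin : W.last = p.first := by rw [hWl, hpf]
          have hfirstp : A.graph.mark (w.f m) (p.f 1) = some Mark.arrow := by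
            have h4 : p.f 0 ∉ A.graph.ancSet ({p.last} ∪ A.sel) := by
              rw [hpl, show p.f 0 = w.f m from hpf]
              exact harrR m hm0 (by omega)
            have h5 := firstArrow htri hacyc hpth hpi hplen h4
            rwa [show p.f 0 = w.f m from hpf] at h5
          refine ⟨cat W p hjoin, ?_, ?_, ?_, ?_, ?_, ?_⟩
          · rw [cat_first]; exact hWf
          · rw [cat_last]; exact hpl
          · show 0 < W.len + p.len; omega
          · intro hlt
            have e : (cat W p hjoin).f ((cat W p hjoin).len - 1) = p.f (p.len - 1) := by
              rw [cat_len, cat_f_ge hjoin (by omega : W.len ≤ W.len + p.len - 1)]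
              congr 1
              omega
            rw [e]
            have h4 : p.last ∉ A.graph.ancSet ({p.first} ∪ A.sel) := by
              rw [hpl, hpf]
              simpa using harrL (m + 1) (by omega) hlt
            have h5 := hla p hpth hpi hplen h4
            rwa [hpl] at h5
          · intro k h0 hk
            rw [cat_len] at hk
            rcases lt_trichotomy k W.len with hkW | hkW | hkW
            · rcases hWint k h0 hkW with h | h
              · left; rwa [cat_f_le hjoin (by omega : k ≤ W.len)]
              · right
                unfold GWalk.ColliderAt at h ⊢
                rw [cat_f_le hjoin (by omega : k ≤ W.len),
                    cat_f_le hjoin (by omega : k - 1 ≤ W.len),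
                    cat_f_le hjoin (by omega : k + 1 ≤ W.len)]
                exact h
            · subst hkW
              right
              unfold GWalk.ColliderAt
              rw [cat_f_le hjoin le_rfl, cat_f_le hjoin (by omega : W.len - 1 ≤ W.len),
                  cat_f_ge hjoin (by omega : W.len ≤ W.len + 1)]
              rw [show W.f W.len = w.f m from hWl,
                  show W.len + 1 - W.len = 1 from by omega]
              exact ⟨hWarr (by omega), hfirstp⟩
            · have h0' : 0 < k - W.len := by omega
              have hk' : k - W.len < p.len := by omega
              rcases hpi.1 (k - W.len) h0' hk' with h | h
              · left; rwa [cat_f_ge hjoin (by omega : W.len ≤ k)]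
              · right
                unfold GWalk.ColliderAt at h ⊢
                rw [cat_f_ge hjoin (by omega : W.len ≤ k),
                    cat_f_ge hjoin (by omega : W.len ≤ k - 1),
                    cat_f_ge hjoin (by omega : W.len ≤ k + 1),
                    show k - 1 - W.len = k - W.len - 1 from by omega,
                    show k + 1 - W.len = k - W.len + 1 from by omega]
                exact h
          · intro k h0 hk hc
            rw [cat_len] at hk
            rcases lt_trichotomy k W.len with hkW | hkW | hkW
            · unfold GWalk.ColliderAt at hc
              rw [cat_f_le hjoin (by omega : k ≤ W.len),
                  cat_f_le hjoin (by omega : k - 1 ≤ W.len),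
                  cat_f_le hjoin (by omega : k + 1 ≤ W.len)] at hc
              rw [cat_f_le hjoin (by omega : k ≤ W.len)]
              exact hWcol k h0 hkW hc
            · subst hkW
              rw [cat_f_le hjoin le_rfl, show W.f W.len = w.f m from hWl]
              exact hmem m (by omega)
            · have h0' : 0 < k - W.len := by omega
              have hk' : k - W.len < p.len := by omega
              rw [cat_f_ge hjoin (by omega : W.len ≤ k)]
              refine hcolp (k - W.len) h0' hk' ?_
              unfold GWalk.ColliderAt at hc ⊢
              rwa [cat_f_ge hjoin (by omega : W.len ≤ k),
                  cat_f_ge hjoin (by omega : W.len ≤ k - 1),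
                  cat_f_ge hjoin (by omega : W.len ≤ k + 1),
                  show k - 1 - W.len = k - W.len - 1 from by omega,
                  show k + 1 - W.len = k - W.len + 1 from by omega] at hc
    obtain ⟨W, hWf, hWl, _, _, hWint, hWcol⟩ := hbuild w.len (by omega) le_rfl
    have hWind : A.graph.InducingWalk A.latent A.sel W := by
      refine ⟨hWint, ?_⟩
      intro k h0 hk hc
      have h1 := hWcol k h0 hk hc
      have hset : ({W.first, W.last} : Set N) = {a, b} := by
        rw [hWf, hWl, show w.f w.len = b from hlast]
      rwa [hset]
    obtain ⟨W', hW'p, hW'f, hW'l, hW'ind⟩ := shorten htri W.len W le_rfl hWind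
    apply hnadj
    rw [mag_adj_iff]
    exact ⟨hab, ha, hb, hII, W', hW'p, by rw [hW'f, hWf],
      by rw [hW'l, hWl, show w.f w.len = b from hlast], hW'ind⟩

end Mag

end S0

/-- Let `A = (I,O,L,S,E)` be an ilsADMG.  Then there exists exactly
one iMAG that represents `A`, namely the explicitly described graph `magOfLS A`
(input nodes `I`, output nodes `O`; distinct `a,b ∈ I ∪ O` adjacent iff
`{a,b} ⊄ I` and there is an `(L,S)`-inducing path between them in `A`; on each
edge the mark at `a` is a tail if `a ∈ Anc_A({b} ∪ S)` and an arrowhead otherwise). -/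
theorem statement0 {N : Type} (A : LSADMG N) (hA : A.WF) :
    ((magOfLS A).IsIMAG ∧ RepresentsLS (magOfLS A) A) ∧
      (∀ M : MixedGraph N, M.IsIMAG → RepresentsLS M A → M = magOfLS A) := by
  have hWF := hA.1.1
  have htri := hA.1.2.1
  have hacyc := hA.1.2.2.1
  have hsymA := hWF.2.2.2.1
  have hMWF : (magOfLS A).WF := by
    refine ⟨?_, ?_, ?_, ?_, ?_, ?_⟩
    · exact hWF.1.mono_right Set.diff_subset
    · exact hWF.2.1
    · exact hWF.2.2.1.subset Set.diff_subset
    · intro x y hxy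
      have hC := (S0.mag_adj_iff A x y).mp hxy
      apply (S0.mag_adj_iff A y x).mpr
      obtain ⟨p, h1, h2, h3, h4⟩ := hC.2.2.2.2
      exact ⟨hC.1.symm, hC.2.2.1, hC.2.1, fun h => hC.2.2.2.1 ⟨h.2, h.1⟩,
        S0.rev p hsymA, S0.rev_isPath h1, by rw [S0.rev_first]; exact h3,
        by rw [S0.rev_last]; exact h2, S0.rev_inducing h4⟩
    · intro x
      rw [S0.mag_mark_def, if_neg]
      rintro ⟨h, -⟩
      exact h rfl
    · intro x y hxy
      have hC := (S0.mag_adj_iff A x y).mp hxy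
      exact ⟨hC.2.1, hC.2.2.1⟩
  have hIPAG : (magOfLS A).IsIPAG := by
    refine ⟨hMWF, ?_, ?_, ?_, ?_, ?_, ?_⟩
    · exact fun x hx y => S0.mag_no_arrow_input A hA hx y
    · exact fun x hx y hy hadj => ((S0.mag_adj_iff A x y).mp hadj).2.2.2.1 ⟨hx, hy⟩
    · intro x y hdir hanc
      exact ((S0.mag_arrow_iff A y x).mp hdir.2).2 (S0.mag_anc A hanc)
    · intro x y hanc hbid
      exact ((S0.mag_arrow_iff A x y).mp hbid.2).2 (S0.mag_anc A hanc)
    · intro x y z harr hund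
      have h1 := ((S0.mag_arrow_iff A y x).mp harr).2
      have h2 := (S0.mag_tail_iff A y z).mp hund.1
      have h3 := (S0.mag_tail_iff A z y).mp hund.2
      obtain ⟨s, hs, hanc⟩ := h2.2
      rcases hs with hs | hs
      · rcases hs
        obtain ⟨t, ht, hanc2⟩ := h3.2
        rcases ht with ht | ht
        · rcases ht
          exact h2.1.1 (S0.anc_antisymm hacyc hanc hanc2)
        · exact h1 ⟨t, Or.inr ht, hanc.trans hanc2⟩
      · exact h1 ⟨s, Or.inr hs, hanc⟩
    · exact fun x y hne hx hy hnadj => S0.mag_maximal A hA hne hx hy hnadj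
  have hRep : RepresentsLS (magOfLS A) A := by
    refine ⟨rfl, rfl, ?_, ?_, ?_⟩
    · intro x y hne hx hy
      rw [S0.mag_adj_iff]
      constructor
      · intro h
        exact ⟨h.2.2.2.1, h.2.2.2.2⟩
      · intro h
        exact ⟨hne, hx, hy, h.1, h.2⟩
    · exact fun x y h => ((S0.mag_arrow_iff A x y).mp h).2
    · exact fun x y h => ((S0.mag_tail_iff A x y).mp h).2
  refine ⟨⟨⟨hIPAG, fun x y => S0.mag_no_circle A x y⟩, hRep⟩, ?_⟩
  intro M hM hrep
  refine S0.MixedGraph.ext' (H := magOfLS A) hrep.1 hrep.2.1 ?_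
  funext x y
  by_cases hxy : x = y
  · subst hxy
    rw [hM.1.1.2.2.2.2.1 x, S0.mag_mark_def, if_neg]
    rintro ⟨h, -⟩
    exact h rfl
  · have hnodes : M.nodes = A.graph.inputs ∪ A.obs := by
      rw [MixedGraph.nodes, hrep.1, hrep.2.1]
    cases hm : M.mark x y with
    | none =>
      symm
      rw [S0.mag_mark_def, if_neg]
      rintro ⟨h1, h2, h3, h4, h5⟩
      have hadj : M.adj x y := by
        apply (hrep.2.2.1 x y hxy (by rw [hnodes]; exact h2) (by rw [hnodes]; exact h3)).mpr
        exact ⟨by rw [hrep.1]; exact h4, h5⟩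
      unfold MixedGraph.adj at hadj
      rw [hm] at hadj
      simp at hadj
    | some m =>
      have hadj : M.adj x y := by unfold MixedGraph.adj; rw [hm]; rfl
      have hmem := hM.1.1.2.2.2.2.2 x y (by rw [hm]; rfl)
      have hC := (hrep.2.2.1 x y hxy hmem.1 hmem.2).mp hadj
      have hCC : S0.C A x y := by
        refine ⟨hxy, ?_, ?_, ?_, hC.2⟩
        · rw [← hnodes]; exact hmem.1
        · rw [← hnodes]; exact hmem.2
        · rw [← hrep.1]; exact hC.1
      rw [S0.mag_mark_def, if_pos hCC]
      cases m with
      | tail => rw [if_pos (hrep.2.2.2.2 x y hm)]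
      | arrow => rw [if_neg (hrep.2.2.2.1 x y hm)]
      | circle => exact absurd hm (hM.2 x y)

end
end

section
/- Let A=(I,O,S,E) be an isADMG and let a∈O and b∈I∪O be distinct. The following are equivalent: (1) there is an S-inducing path from a to b in A; (2) there is an S-inducing walk from a to b in A; (3) for every Z⊆(I∪O)∖{a,b}, a is not id-separated from b given S∪Z in A; (4) a is not id-separated from b given S∪Z in A for Z=(I∪Anc_A({a,b}∪S))∖{a,b}. -/
noncomputable section
open Classical

section Statement1Aux

open MixedGraph

variable {N : Type} {G : MixedGraph N}

private lemma dirAdj {a b : N} (h : G.dir a b) : G.adj a b := by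
  unfold MixedGraph.adj; rw [h.1]; rfl

private lemma dirAdj' {a b : N} (h : G.dir a b) : G.adj b a := by
  unfold MixedGraph.adj; rw [h.2]; rfl

private lemma adjSymm (hG : G.IsIADMG) {a b : N} (h : G.adj a b) : G.adj b a :=
  hG.1.2.2.2.1 a b h

private lemma tail_of_not_arrow (hG : G.IsIADMG) {a b : N}
    (hadj : G.adj a b) (h : G.mark a b ≠ some Mark.arrow) : G.dir a b := by
  rcases hG.2.1 a b hadj with h' | h' | h'
  · exact h'
  · exact absurd h'.2 h
  · exact absurd h'.1 h

private lemma mem_ancSet_self {S : Set N} {x : N} (h : x ∈ S) : x ∈ G.ancSet S :=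
  ⟨x, h, Relation.ReflTransGen.refl⟩

private lemma anc_ancSet {S : Set N} {x y : N} (hxy : G.anc x y)
    (hy : y ∈ G.ancSet S) : x ∈ G.ancSet S := by
  obtain ⟨s, hs, h⟩ := hy
  exact ⟨s, hs, Relation.ReflTransGen.trans hxy h⟩

private lemma anc_input (hG : G.IsIADMG) {i x : N} (hi : i ∈ G.inputs)
    (h : G.anc x i) : x = i := by
  rcases Relation.ReflTransGen.cases_tail h with h' | ⟨c, _, hc⟩
  · exact h'.symm
  · exact absurd hc.2 (hG.2.2.2.1 i hi c)

private lemma ancSet_bound (hG : G.IsIADMG) {T C : Set N}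
    (hT : ∀ x y, G.anc x y → y ∈ T → x ∈ T)
    (hC : C ⊆ G.inputs ∪ T) : G.ancSet C ⊆ G.inputs ∪ T := by
  rintro x ⟨c, hc, hxc⟩
  rcases hC hc with hci | hct
  · exact Or.inl ((anc_input hG hci hxc) ▸ hci)
  · exact Or.inr (hT x c hxc hct)

private lemma ancSet_mem_nodes (hWF : G.WF) {S : Set N} (hS : S ⊆ G.nodes) {x : N}
    (h : x ∈ G.ancSet S) : x ∈ G.nodes := by
  obtain ⟨s, hs, hanc⟩ := h
  rcases Relation.ReflTransGen.cases_head hanc with rfl | ⟨z, hxz, _⟩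
  · exact hS hs
  · exact (hWF.2.2.2.2.2 x z (by rw [hxz.1]; rfl)).1

private lemma exists_dirPath {c a : N} (h : G.anc c a) :
    ∃ (k : ℕ) (p : ℕ → N), p 0 = c ∧ p k = a ∧ ∀ m < k, G.dir (p m) (p (m + 1)) := by
  induction h with
  | refl => exact ⟨0, fun _ => c, rfl, rfl, fun m hm => absurd hm (Nat.not_lt_zero m)⟩
  | @tail x y hcx hxy ih =>
      obtain ⟨k, p, h0, hk, hp⟩ := ih
      refine ⟨k + 1, fun m => if m ≤ k then p m else y, ?_, ?_, ?_⟩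
      · show (if 0 ≤ k then p 0 else y) = c
        rw [if_pos (Nat.zero_le k)]; exact h0
      · show (if k + 1 ≤ k then p (k + 1) else y) = y
        rw [if_neg (by omega)]
      · intro m hm
        show G.dir (if m ≤ k then p m else y) (if m + 1 ≤ k then p (m + 1) else y)
        rcases Nat.lt_or_ge m k with h' | h'
        · rw [if_pos (by omega), if_pos (by omega)]
          exact hp m h'
        · have hmk : m = k := by omega
          subst hmk
          rw [if_pos le_rfl, if_neg (by omega), hk]
          exact hxy

private lemma dirPath_anc {k : ℕ} {p : ℕ → N} (hp : ∀ m < k, G.dir (p m) (p (m + 1))) :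
    ∀ m ≤ k, G.anc (p 0) (p m) := by
  intro m
  induction m with
  | zero => exact fun _ => Relation.ReflTransGen.refl
  | succ n ih =>
      exact fun h => Relation.ReflTransGen.tail (ih (by omega)) (hp n (by omega))

private lemma collider_congr {w w' : GWalk G} {t u : ℕ}
    (h0 : w'.f t = w.f u) (h1 : w'.f (t - 1) = w.f (u - 1))
    (h2 : w'.f (t + 1) = w.f (u + 1)) :
    w'.ColliderAt t ↔ w.ColliderAt u := by
  unfold GWalk.ColliderAt
  rw [h0, h1, h2]

private lemma splice {S : Set N} {a b : N} (w : GWalk G)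
    (hf : w.first = a) (hl : w.last = b) (hind : G.InducingWalk ∅ S w)
    {i j : ℕ} (hij : i < j) (hj : j ≤ w.len) (heq : w.f i = w.f j) :
    ∃ w' : GWalk G, w'.len < w.len ∧ w'.first = a ∧ w'.last = b ∧
      G.InducingWalk ∅ S w' := by
  have hcol : ∀ t, 0 < t → t < w.len →
      w.ColliderAt t ∧ w.f t ∈ G.ancSet ({a, b} ∪ S) := by
    intro t h1 h2
    have hc : w.ColliderAt t := by
      rcases hind.1 t h1 h2 with h' | h'
      · exact absurd h' (Set.notMem_empty _)
      · exact h'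
    refine ⟨hc, ?_⟩
    have := hind.2 t h1 h2 hc
    rwa [hf, hl] at this
  set d := j - i with hd
  have hadj' : ∀ t < w.len - d,
      G.adj ((fun t => if t ≤ i then w.f t else w.f (t + d)) t)
        ((fun t => if t ≤ i then w.f t else w.f (t + d)) (t + 1)) := by
    intro t ht
    show G.adj (if t ≤ i then w.f t else w.f (t + d))
      (if t + 1 ≤ i then w.f (t + 1) else w.f (t + 1 + d))
    rcases lt_trichotomy t i with h | h | h
    · rw [if_pos (by omega), if_pos (by omega)]
      exact w.hadj t (by omega)
    · subst h
      rw [if_pos le_rfl, if_neg (by omega), show t + 1 + d = j + 1 by omega, heq]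
      exact w.hadj j (by omega)
    · rw [if_neg (by omega), if_neg (by omega), show t + 1 + d = (t + d) + 1 by omega]
      exact w.hadj (t + d) (by omega)
  refine ⟨⟨w.len - d, fun t => if t ≤ i then w.f t else w.f (t + d), hadj'⟩,
    show w.len - d < w.len by omega, ?_, ?_, ?_⟩
  · show (if 0 ≤ i then w.f 0 else w.f (0 + d)) = a
    rw [if_pos (Nat.zero_le i)]; exact hf
  · show (if w.len - d ≤ i then w.f (w.len - d) else w.f (w.len - d + d)) = b
    by_cases hc : w.len - d ≤ i
    · rw [if_pos hc, show w.len - d = i by omega, heq, show j = w.len by omega]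
      exact hl
    · rw [if_neg hc, show w.len - d + d = w.len by omega]
      exact hl
  · set w' : GWalk G :=
      ⟨w.len - d, fun t => if t ≤ i then w.f t else w.f (t + d), hadj'⟩ with hw'
    have hfval : ∀ t, w'.f t = if t ≤ i then w.f t else w.f (t + d) := fun t => rfl
    have key : ∀ t, 0 < t → t < w'.len →
        w'.ColliderAt t ∧ w'.f t ∈ G.ancSet ({a, b} ∪ S) := by
      intro t h1 h2
      have h2' : t < w.len - d := h2
      rcases lt_trichotomy t i with h | h | h
      · have e0 : w'.f t = w.f t := by rw [hfval, if_pos (by omega)]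
        have e1 : w'.f (t - 1) = w.f (t - 1) := by rw [hfval, if_pos (by omega)]
        have e2 : w'.f (t + 1) = w.f (t + 1) := by rw [hfval, if_pos (by omega)]
        have := hcol t h1 (by omega)
        exact ⟨(collider_congr e0 e1 e2).mpr this.1, e0 ▸ this.2⟩
      · subst h
        have e0 : w'.f t = w.f t := by rw [hfval, if_pos le_rfl]
        have e1 : w'.f (t - 1) = w.f (t - 1) := by rw [hfval, if_pos (by omega)]
        have e2 : w'.f (t + 1) = w.f (j + 1) := by
          rw [hfval, if_neg (by omega), show t + 1 + d = j + 1 by omega]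
        have hci := hcol t h1 (by omega)
        have hcj := hcol j (by omega) (by omega)
        refine ⟨⟨?_, ?_⟩, e0 ▸ hci.2⟩
        · rw [e0, e1]; exact hci.1.1
        · rw [e0, e2, heq]; exact hcj.1.2
      · have e0 : w'.f t = w.f (t + d) := by rw [hfval, if_neg (by omega)]
        have e1 : w'.f (t - 1) = w.f (t + d - 1) := by
          rcases Nat.eq_or_lt_of_le (Nat.succ_le_of_lt h) with h' | h'
          · rw [hfval, if_pos (by omega), show t - 1 = i by omega, heq,
              show t + d - 1 = j by omega]
          · rw [hfval, if_neg (by omega), show t - 1 + d = t + d - 1 by omega]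
        have e2 : w'.f (t + 1) = w.f (t + d + 1) := by
          rw [hfval, if_neg (by omega), show t + 1 + d = t + d + 1 by omega]
        have := hcol (t + d) (by omega) (by omega)
        exact ⟨(collider_congr e0 e1 e2).mpr this.1, e0 ▸ this.2⟩
    constructor
    · exact fun t h1 h2 => Or.inr (key t h1 h2).1
    · intro t h1 h2 _
      have hfst : w'.first = a := by
        show (if 0 ≤ i then w.f 0 else w.f (0 + d)) = a
        rw [if_pos (Nat.zero_le i)]; exact hf
      have hlst : w'.last = b := by
        show (if w.len - d ≤ i then w.f (w.len - d) else w.f (w.len - d + d)) = b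
        by_cases hc : w.len - d ≤ i
        · rw [if_pos hc, show w.len - d = i by omega, heq, show j = w.len by omega]
          exact hl
        · rw [if_neg hc, show w.len - d + d = w.len by omega]
          exact hl
      rw [hfst, hlst]
      exact (key t h1 h2).2

private lemma walk_to_path_aux (hG : G.IsIADMG) {S : Set N} {a b : N} :
    ∀ n, ∀ w : GWalk G, w.len ≤ n → w.first = a → w.last = b →
      G.InducingWalk ∅ S w → G.InducingPathBtw ∅ S a b := by
  intro n
  induction n with
  | zero =>
      intro w hlen hf hl hind
      exact ⟨w, fun i hi j hj _ => by omega, hf, hl, hind⟩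
  | succ n ih =>
      intro w hlen hf hl hind
      by_cases hp : w.IsPath
      · exact ⟨w, hp, hf, hl, hind⟩
      · unfold GWalk.IsPath at hp
        push_neg at hp
        obtain ⟨i, hi, j, hj, hfeq, hne⟩ := hp
        rcases Nat.lt_or_ge i j with hij | hij
        · obtain ⟨w', hlt, hf', hl', hind'⟩ := splice w hf hl hind hij hj hfeq
          exact ih w' (by omega) hf' hl' hind'
        · have hij' : j < i := by omega
          obtain ⟨w', hlt, hf', hl', hind'⟩ := splice w hf hl hind hij' hi hfeq.symm
          exact ih w' (by omega) hf' hl' hind'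

private def goodW (G : MixedGraph N) (C S : Set N) (a b : N) (w : GWalk G) : Prop :=
  w.first = a ∧ w.last = b ∧ ∀ t, 0 < t → t < w.len →
    (¬ w.ColliderAt t → w.f t ∉ C) ∧
    (w.ColliderAt t → w.f t ∈ G.ancSet ({a, b} ∪ S))

private noncomputable def badSet (G : MixedGraph N) (C : Set N) (w : GWalk G) :
    Finset ℕ :=
  (Finset.range (w.len + 1)).filter
    (fun t => 0 < t ∧ t < w.len ∧ w.ColliderAt t ∧ w.f t ∉ G.ancSet C)

private lemma mem_badSet {C : Set N} {w : GWalk G} {t : ℕ} :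
    t ∈ badSet G C w ↔ 0 < t ∧ t < w.len ∧ w.ColliderAt t ∧ w.f t ∉ G.ancSet C := by
  unfold badSet
  rw [Finset.mem_filter, Finset.mem_range]
  constructor
  · exact fun h => h.2
  · exact fun h => ⟨by omega, h⟩

private lemma repair (hG : G.IsIADMG) {S C : Set N} {a b : N}
    (hSC : S ⊆ C) (haC : a ∉ C) (hbC : b ∉ C) :
    ∀ n, ∀ w : GWalk G, goodW G C S a b w → (badSet G C w).card ≤ n →
      ∃ w' : GWalk G, w'.first = a ∧ w'.last = b ∧ COpen G C w' := by
  intro n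
  induction n using Nat.strong_induction_on with
  | _ n ih =>
  intro w hg hc
  by_cases hempty : badSet G C w = ∅
  · refine ⟨w, hg.1, hg.2.1, hg.1 ▸ haC, hg.2.1 ▸ hbC, ?_⟩
    intro t ht1 ht2
    refine ⟨fun hnc => (hg.2.2 t ht1 ht2).1 hnc, fun hcol => ?_⟩
    by_contra hmem
    rw [Finset.eq_empty_iff_forall_notMem] at hempty
    exact hempty t (mem_badSet.mpr ⟨ht1, ht2, hcol, hmem⟩)
  · obtain ⟨i, hi⟩ := Finset.nonempty_iff_ne_empty.mpr hempty
    have hibad := hi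
    rw [mem_badSet] at hi
    obtain ⟨hi0, hilen, hicol, hinanc⟩ := hi
    have hn1 : 1 ≤ (badSet G C w).card := Finset.card_pos.mpr ⟨i, hibad⟩
    obtain ⟨s, hsmem, hanc⟩ := (hg.2.2 i hi0 hilen).2 hicol
    rcases hsmem with hsab | hsS
    swap
    · exact absurd ⟨s, hSC hsS, hanc⟩ hinanc
    simp only [Set.mem_insert_iff, Set.mem_singleton_iff] at hsab
    rcases hsab with hsa | hsb
    · -- s = a : replace the prefix by a reversed directed path from w.f i to a
      rw [hsa] at hanc
      obtain ⟨k, p, hp0, hpk, hpd⟩ := exists_dirPath hanc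
      have hpanc : ∀ m ≤ k, G.anc (w.f i) (p m) :=
        fun m hm => hp0 ▸ dirPath_anc hpd m hm
      have hpnanc : ∀ m ≤ k, p m ∉ G.ancSet C :=
        fun m hm hmem => hinanc (anc_ancSet (hpanc m hm) hmem)
      have hpC : ∀ m ≤ k, p m ∉ C :=
        fun m hm hmem => hpnanc m hm (mem_ancSet_self hmem)
      have hadj' : ∀ t < k + (w.len - i),
          G.adj ((fun t => if t ≤ k then p (k - t) else w.f (t - k + i)) t)
            ((fun t => if t ≤ k then p (k - t) else w.f (t - k + i)) (t + 1)) := by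
        intro t ht
        show G.adj (if t ≤ k then p (k - t) else w.f (t - k + i))
          (if t + 1 ≤ k then p (k - (t + 1)) else w.f (t + 1 - k + i))
        rcases lt_trichotomy t k with h | h | h
        · rw [if_pos (by omega), if_pos (by omega)]
          have := hpd (k - (t + 1)) (by omega)
          rw [show k - (t + 1) + 1 = k - t by omega] at this
          exact dirAdj' this
        · subst h
          rw [if_pos le_rfl, if_neg (by omega), Nat.sub_self, hp0,
            show t + 1 - t + i = i + 1 by omega]
          exact w.hadj i (by omega)
        · rw [if_neg (by omega), if_neg (by omega),
            show t + 1 - k + i = (t - k + i) + 1 by omega]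
          exact w.hadj (t - k + i) (by omega)
      set w' : GWalk G :=
        ⟨k + (w.len - i), fun t => if t ≤ k then p (k - t) else w.f (t - k + i), hadj'⟩
        with hw'
      have hfval : ∀ t, w'.f t = if t ≤ k then p (k - t) else w.f (t - k + i) :=
        fun t => rfl
      have hfst : w'.first = a := by
        show (if 0 ≤ k then p (k - 0) else w.f (0 - k + i)) = a
        rw [if_pos (Nat.zero_le k), Nat.sub_zero]
        exact hpk
      have hlst : w'.last = b := by
        show (if k + (w.len - i) ≤ k then p (k - (k + (w.len - i)))
          else w.f (k + (w.len - i) - k + i)) = b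
        rw [if_neg (by omega), show k + (w.len - i) - k + i = w.len by omega]
        exact hg.2.1
      -- values on the reversed directed-path part
      have hvlow : ∀ t ≤ k, w'.f t = p (k - t) := by
        intro t ht; rw [hfval, if_pos ht]
      have hvhigh : ∀ t, k ≤ t → w'.f t = w.f (t - k + i) := by
        intro t ht
        rcases Nat.eq_or_lt_of_le ht with h | h
        · rw [hfval, if_pos (by omega), show k - t = 0 by omega, hp0,
            show t - k + i = i by omega]
        · rw [hfval, if_neg (by omega)]
      have hncolle : ∀ t, 0 < t → t ≤ k → ¬ w'.ColliderAt t := by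
        intro t h1 h2 hcol'
        have e1 : w'.f (t - 1) = p (k - t + 1) := by
          have := hvlow (t - 1) (by omega)
          rwa [show k - (t - 1) = k - t + 1 by omega] at this
        have := hcol'.1
        rw [hvlow t h2, e1, (hpd (k - t) (by omega)).1] at this
        simp at this
      have hkey : ∀ t, 0 < t → t < w'.len →
          (¬ w'.ColliderAt t → w'.f t ∉ C) ∧
          (w'.ColliderAt t → w'.f t ∈ G.ancSet ({a, b} ∪ S)) ∧
          (w'.ColliderAt t →
            k < t ∧ w.ColliderAt (t - k + i) ∧ w'.f t = w.f (t - k + i)) := by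
        intro t h1 h2
        have h2' : t < k + (w.len - i) := h2
        rcases Nat.lt_or_ge k t with h | h
        · -- t > k : transfer from w at u = t - k + i
          have e0 : w'.f t = w.f (t - k + i) := hvhigh t (by omega)
          have e1 : w'.f (t - 1) = w.f (t - k + i - 1) := by
            have := hvhigh (t - 1) (by omega)
            rwa [show t - 1 - k + i = t - k + i - 1 by omega] at this
          have e2 : w'.f (t + 1) = w.f (t - k + i + 1) := by
            have := hvhigh (t + 1) (by omega)
            rwa [show t + 1 - k + i = t - k + i + 1 by omega] at this
          have hu := hg.2.2 (t - k + i) (by omega) (by omega)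
          have ecol := collider_congr e0 e1 e2
          exact ⟨fun hnc => by rw [e0]; exact hu.1 (fun hcw => hnc (ecol.mpr hcw)),
            fun hcw => by rw [e0]; exact hu.2 (ecol.mp hcw),
            fun hcw => ⟨h, ecol.mp hcw, e0⟩⟩
        · -- t ≤ k : non-collider on the directed path, not in C
          have hnc := hncolle t h1 h
          refine ⟨fun _ => ?_, fun hcw => absurd hcw hnc, fun hcw => absurd hcw hnc⟩
          rw [hvlow t h]
          exact hpC (k - t) (by omega)
      have hgood' : goodW G C S a b w' :=
        ⟨hfst, hlst, fun t h1 h2 => ⟨(hkey t h1 h2).1, (hkey t h1 h2).2.1⟩⟩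
      have hinj : Set.InjOn (fun t => t - k + i) ↑(badSet G C w') := by
        intro t1 h1 t2 h2 he
        rw [Finset.mem_coe, mem_badSet] at h1 h2
        have hk1 := ((hkey t1 h1.1 h1.2.1).2.2 h1.2.2.1).1
        have hk2 := ((hkey t2 h2.1 h2.2.1).2.2 h2.2.2.1).1
        simp only at he
        omega
      have hmaps : ∀ t ∈ badSet G C w', t - k + i ∈ (badSet G C w).erase i := by
        intro t ht
        rw [mem_badSet] at ht
        obtain ⟨ht0, htlen, htcol, htnanc⟩ := ht
        obtain ⟨hk, hcw, he⟩ := (hkey t ht0 htlen).2.2 htcol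
        rw [Finset.mem_erase, mem_badSet]
        have htlen' : t < k + (w.len - i) := htlen
        exact ⟨by omega, by omega, by omega, hcw, he ▸ htnanc⟩
      have hcard : (badSet G C w').card < n := by
        calc (badSet G C w').card ≤ ((badSet G C w).erase i).card :=
              Finset.card_le_card_of_injOn _ hmaps hinj
          _ < (badSet G C w).card := Finset.card_erase_lt_of_mem hibad
          _ ≤ n := hc
      exact ih _ hcard w' hgood' le_rfl
    · -- s = b : replace the suffix by a directed path from w.f i to b
      rw [hsb] at hanc
      obtain ⟨k, p, hp0, hpk, hpd⟩ := exists_dirPath hanc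
      have hpanc : ∀ m ≤ k, G.anc (w.f i) (p m) :=
        fun m hm => hp0 ▸ dirPath_anc hpd m hm
      have hpnanc : ∀ m ≤ k, p m ∉ G.ancSet C :=
        fun m hm hmem => hinanc (anc_ancSet (hpanc m hm) hmem)
      have hpC : ∀ m ≤ k, p m ∉ C :=
        fun m hm hmem => hpnanc m hm (mem_ancSet_self hmem)
      have hadj' : ∀ t < i + k,
          G.adj ((fun t => if t ≤ i then w.f t else p (t - i)) t)
            ((fun t => if t ≤ i then w.f t else p (t - i)) (t + 1)) := by
        intro t ht
        show G.adj (if t ≤ i then w.f t else p (t - i))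
          (if t + 1 ≤ i then w.f (t + 1) else p (t + 1 - i))
        rcases lt_trichotomy t i with h | h | h
        · rw [if_pos (by omega), if_pos (by omega)]
          exact w.hadj t (by omega)
        · subst h
          rw [if_pos le_rfl, if_neg (by omega), show t + 1 - t = 1 by omega, ← hp0]
          exact dirAdj (hpd 0 (by omega))
        · rw [if_neg (by omega), if_neg (by omega),
            show t + 1 - i = (t - i) + 1 by omega]
          exact dirAdj (hpd (t - i) (by omega))
      set w' : GWalk G :=
        ⟨i + k, fun t => if t ≤ i then w.f t else p (t - i), hadj'⟩ with hw'
      have hfval : ∀ t, w'.f t = if t ≤ i then w.f t else p (t - i) := fun t => rfl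
      have hfst : w'.first = a := by
        show (if 0 ≤ i then w.f 0 else p (0 - i)) = a
        rw [if_pos (Nat.zero_le i)]
        exact hg.1
      have hvlow : ∀ t ≤ i, w'.f t = w.f t := by
        intro t ht; rw [hfval, if_pos ht]
      have hvhigh : ∀ t, i ≤ t → w'.f t = p (t - i) := by
        intro t ht
        rcases Nat.eq_or_lt_of_le ht with h | h
        · rw [hfval, if_pos (by omega), show t - i = 0 by omega, hp0, ← h]
        · rw [hfval, if_neg (by omega)]
      have hlst : w'.last = b := by
        show w'.f (i + k) = b
        rw [hvhigh (i + k) (by omega), show i + k - i = k by omega]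
        exact hpk
      have hncolge : ∀ t, i ≤ t → t < i + k → ¬ w'.ColliderAt t := by
        intro t h1 h2 hcol'
        have e2 : w'.f (t + 1) = p (t - i + 1) := by
          have := hvhigh (t + 1) (by omega)
          rwa [show t + 1 - i = t - i + 1 by omega] at this
        have := hcol'.2
        rw [hvhigh t h1, e2, (hpd (t - i) (by omega)).1] at this
        simp at this
      have hkey : ∀ t, 0 < t → t < w'.len →
          (¬ w'.ColliderAt t → w'.f t ∉ C) ∧
          (w'.ColliderAt t → w'.f t ∈ G.ancSet ({a, b} ∪ S)) ∧
          (w'.ColliderAt t → t < i ∧ w.ColliderAt t ∧ w'.f t = w.f t) := by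
        intro t h1 h2
        have h2' : t < i + k := h2
        rcases Nat.lt_or_ge t i with h | h
        · have e0 : w'.f t = w.f t := hvlow t (by omega)
          have e1 : w'.f (t - 1) = w.f (t - 1) := hvlow (t - 1) (by omega)
          have e2 : w'.f (t + 1) = w.f (t + 1) := hvlow (t + 1) (by omega)
          have hu := hg.2.2 t (by omega) (by omega)
          have ecol := collider_congr e0 e1 e2
          exact ⟨fun hnc => by rw [e0]; exact hu.1 (fun hcw => hnc (ecol.mpr hcw)),
            fun hcw => by rw [e0]; exact hu.2 (ecol.mp hcw),
            fun hcw => ⟨h, ecol.mp hcw, e0⟩⟩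
        · have hnc := hncolge t h h2'
          refine ⟨fun _ => ?_, fun hcw => absurd hcw hnc, fun hcw => absurd hcw hnc⟩
          rw [hvhigh t h]
          exact hpC (t - i) (by omega)
      have hgood' : goodW G C S a b w' :=
        ⟨hfst, hlst, fun t h1 h2 => ⟨(hkey t h1 h2).1, (hkey t h1 h2).2.1⟩⟩
      have hmaps : badSet G C w' ⊆ (badSet G C w).erase i := by
        intro t ht
        rw [mem_badSet] at ht
        obtain ⟨ht0, htlen, htcol, htnanc⟩ := ht
        obtain ⟨hk, hcw, he⟩ := (hkey t ht0 htlen).2.2 htcol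
        rw [Finset.mem_erase, mem_badSet]
        exact ⟨by omega, by omega, by omega, hcw, he ▸ htnanc⟩
      have hcard : (badSet G C w').card < n := by
        calc (badSet G C w').card ≤ ((badSet G C w).erase i).card :=
              Finset.card_le_card hmaps
          _ < (badSet G C w).card := Finset.card_erase_lt_of_mem hibad
          _ ≤ n := hc
      exact ih _ hcard w' hgood' le_rfl

private lemma inducing_to_open (hG : G.IsIADMG) {S C : Set N} {a b : N}
    (hSC : S ⊆ C) (haC : a ∉ C) (hbC : b ∉ C)
    (h : G.InducingWalkBtw ∅ S a b) :
    ∃ w : GWalk G, w.first = a ∧ w.last = b ∧ COpen G C w := by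
  obtain ⟨w, hf, hl, hind⟩ := h
  have hgood : goodW G C S a b w := by
    refine ⟨hf, hl, fun t h1 h2 => ?_⟩
    have hcol : w.ColliderAt t := by
      rcases hind.1 t h1 h2 with h' | h'
      · exact absurd h' (Set.notMem_empty _)
      · exact h'
    refine ⟨fun hnc => absurd hcol hnc, fun _ => ?_⟩
    have := hind.2 t h1 h2 hcol
    rwa [hf, hl] at this
  exact repair hG hSC haC hbC _ w hgood le_rfl

private lemma chainA (hG : G.IsIADMG) {S C : Set N} {a b : N}
    (hCanc : G.ancSet C ⊆ G.inputs ∪ G.ancSet ({a, b} ∪ S))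
    (w : GWalk G) (hl : w.last = b)
    (hcol : ∀ t, 0 < t → t < w.len → w.ColliderAt t → w.f t ∈ G.ancSet C) :
    ∀ d i, i < w.len → w.len - i ≤ d → G.dir (w.f i) (w.f (i + 1)) →
      w.f i ∈ G.ancSet ({a, b} ∪ S) := by
  intro d
  induction d with
  | zero => intro i hi hd; omega
  | succ d ih =>
      intro i hi hd hdir
      by_cases hend : i + 1 = w.len
      · refine ⟨b, by simp, ?_⟩
        have hb : w.f (i + 1) = b := by rw [hend]; exact hl
        exact hb ▸ Relation.ReflTransGen.single hdir
      · have hint : i + 1 < w.len := by omega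
        by_cases hc : w.ColliderAt (i + 1)
        · have hmem := hcol (i + 1) (by omega) hint hc
          rcases hCanc hmem with hin | hT
          · exact absurd hdir.2 (hG.2.2.2.1 (w.f (i + 1)) hin (w.f i))
          · exact anc_ancSet (Relation.ReflTransGen.single hdir) hT
        · have h1 : G.mark (w.f (i + 1)) (w.f (i + 1 - 1)) = some Mark.arrow := by
            rw [show i + 1 - 1 = i from rfl]
            exact hdir.2
          have h2 : G.mark (w.f (i + 1)) (w.f (i + 1 + 1)) ≠ some Mark.arrow :=
            fun h2' => hc ⟨h1, h2'⟩
          have hdir2 : G.dir (w.f (i + 1)) (w.f (i + 1 + 1)) :=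
            tail_of_not_arrow hG (w.hadj (i + 1) hint) h2
          exact anc_ancSet (Relation.ReflTransGen.single hdir)
            (ih (i + 1) hint (by omega) hdir2)

private lemma chainB (hG : G.IsIADMG) {S C : Set N} {a b : N}
    (hCanc : G.ancSet C ⊆ G.inputs ∪ G.ancSet ({a, b} ∪ S))
    (w : GWalk G) (hf : w.first = a)
    (hcol : ∀ t, 0 < t → t < w.len → w.ColliderAt t → w.f t ∈ G.ancSet C) :
    ∀ i, 0 < i → i ≤ w.len → G.dir (w.f i) (w.f (i - 1)) →
      w.f i ∈ G.ancSet ({a, b} ∪ S) := by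
  intro i
  induction i with
  | zero => intro h; omega
  | succ m ih =>
      intro _ hle hdir
      have hdir' : G.dir (w.f (m + 1)) (w.f m) := by
        rwa [show m + 1 - 1 = m from rfl] at hdir
      by_cases hm : m = 0
      · subst hm
        refine ⟨a, by simp, ?_⟩
        have ha0 : w.f 0 = a := hf
        exact ha0 ▸ Relation.ReflTransGen.single hdir'
      · have hint : m < w.len := by omega
        have harr : G.mark (w.f m) (w.f (m + 1)) = some Mark.arrow := hdir'.2
        by_cases hc : w.ColliderAt m
        · have hmem := hcol m (by omega) hint hc
          rcases hCanc hmem with hin | hT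
          · exact absurd harr (hG.2.2.2.1 (w.f m) hin (w.f (m + 1)))
          · exact anc_ancSet (Relation.ReflTransGen.single hdir') hT
        · have h2 : G.mark (w.f m) (w.f (m - 1)) ≠ some Mark.arrow :=
            fun h' => hc ⟨h', harr⟩
          have hadjm : G.adj (w.f m) (w.f (m - 1)) := by
            have := w.hadj (m - 1) (by omega)
            rw [show m - 1 + 1 = m by omega] at this
            exact adjSymm hG this
          exact anc_ancSet (Relation.ReflTransGen.single hdir')
            (ih (by omega) (by omega) (tail_of_not_arrow hG hadjm h2))

private lemma open_to_inducing (hG : G.IsIADMG) {S C : Set N} {a b : N}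
    (hCanc : G.ancSet C ⊆ G.inputs ∪ G.ancSet ({a, b} ∪ S))
    (hTC : ∀ x, x ∈ G.ancSet ({a, b} ∪ S) → x ≠ a → x ≠ b → x ∈ C) :
    ∀ n, ∀ w : GWalk G, w.len ≤ n → w.first = a → w.last = b → COpen G C w →
      G.InducingWalkBtw ∅ S a b := by
  intro n
  induction n with
  | zero =>
      intro w hlen hf hl _
      exact ⟨w, hf, hl, fun t h1 h2 => absurd h2 (by omega),
        fun t h1 h2 => absurd h2 (by omega)⟩
  | succ n ih =>
      intro w hlen hf hl hop
      by_cases hrep : ∃ t, 0 < t ∧ t < w.len ∧ (w.f t = a ∨ w.f t = b)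
      · obtain ⟨t, ht0, htlen, hab'⟩ := hrep
        rcases hab' with hta | htb
        · -- suffix from t
          have hadj1 : ∀ m < w.len - t,
              G.adj ((fun m => w.f (m + t)) m) ((fun m => w.f (m + t)) (m + 1)) := by
            intro m hm
            show G.adj (w.f (m + t)) (w.f (m + 1 + t))
            rw [show m + 1 + t = m + t + 1 by omega]
            exact w.hadj (m + t) (by omega)
          set w1 : GWalk G := ⟨w.len - t, fun m => w.f (m + t), hadj1⟩ with hw1
          have hf1 : w1.first = a := by
            show w.f (0 + t) = a
            rw [Nat.zero_add]; exact hta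
          have hl1 : w1.last = b := by
            show w.f (w.len - t + t) = b
            rw [Nat.sub_add_cancel (le_of_lt htlen)]; exact hl
          refine ih w1 (by show w.len - t ≤ n; omega) hf1 hl1 ⟨?_, ?_, ?_⟩
          · rw [hf1]; exact hf ▸ hop.1
          · rw [hl1]; exact hl ▸ hop.2.1
          · intro m h1 h2
            have h2' : m < w.len - t := h2
            have e0 : w1.f m = w.f (m + t) := rfl
            have e1 : w1.f (m - 1) = w.f (m + t - 1) := by
              show w.f (m - 1 + t) = w.f (m + t - 1)
              rw [show m - 1 + t = m + t - 1 by omega]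
            have e2 : w1.f (m + 1) = w.f (m + t + 1) := by
              show w.f (m + 1 + t) = w.f (m + t + 1)
              rw [show m + 1 + t = m + t + 1 by omega]
            have ecol := collider_congr e0 e1 e2
            have hu := hop.2.2 (m + t) (by omega) (by omega)
            exact ⟨fun hnc => by rw [e0]; exact hu.1 (fun hcw => hnc (ecol.mpr hcw)),
              fun hcw => by rw [e0]; exact hu.2 (ecol.mp hcw)⟩
        · -- prefix up to t
          set w1 : GWalk G := ⟨t, w.f, fun m hm => w.hadj m (by omega)⟩ with hw1
          have hf1 : w1.first = a := hf
          have hl1 : w1.last = b := htb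
          refine ih w1 (by show t ≤ n; omega) hf1 hl1 ⟨?_, ?_, ?_⟩
          · rw [hf1]; exact hf ▸ hop.1
          · rw [hl1]; exact hl ▸ hop.2.1
          · intro m h1 h2
            have h2' : m < t := h2
            exact hop.2.2 m h1 (by omega)
      · push_neg at hrep
        have key : ∀ t, 0 < t → t < w.len →
            w.ColliderAt t ∧ w.f t ∈ G.ancSet ({a, b} ∪ S) := by
          intro t h1 h2
          have hcols : ∀ u, 0 < u → u < w.len → w.ColliderAt u →
              w.f u ∈ G.ancSet C :=
            fun u hu1 hu2 hcu => (hop.2.2 u hu1 hu2).2 hcu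
          have hcolt : w.ColliderAt t := by
            by_contra hnc
            have hT : w.f t ∈ G.ancSet ({a, b} ∪ S) := by
              have hor : G.mark (w.f t) (w.f (t - 1)) ≠ some Mark.arrow ∨
                  G.mark (w.f t) (w.f (t + 1)) ≠ some Mark.arrow := by
                by_contra hcon
                push_neg at hcon
                exact hnc ⟨hcon.1, hcon.2⟩
              rcases hor with hmk | hmk
              · have hadjt : G.adj (w.f t) (w.f (t - 1)) := by
                  have := w.hadj (t - 1) (by omega)
                  rw [show t - 1 + 1 = t by omega] at this
                  exact adjSymm hG this
                exact chainB hG hCanc w hf hcols t h1 h2.le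
                  (tail_of_not_arrow hG hadjt hmk)
              · exact chainA hG hCanc w hl hcols (w.len - t) t h2 le_rfl
                  (tail_of_not_arrow hG (w.hadj t h2) hmk)
            have := (hrep t h1 h2)
            exact absurd (hTC _ hT this.1 this.2) ((hop.2.2 t h1 h2).1 hnc)
          refine ⟨hcolt, ?_⟩
          rcases hCanc ((hop.2.2 t h1 h2).2 hcolt) with hin | hT
          · exact absurd hcolt.1 (hG.2.2.2.1 (w.f t) hin (w.f (t - 1)))
          · exact hT
        exact ⟨w, hf, hl, fun t h1 h2 => Or.inr (key t h1 h2).1,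
          fun t h1 h2 _ => by rw [hf, hl]; exact (key t h1 h2).2⟩

end Statement1Aux

/-- For an isADMG `A = (I,O,S,E)` and distinct `a ∈ O`,
`b ∈ I ∪ O`, the following are equivalent: (1) there is an `S`-inducing path from
`a` to `b`; (2) there is an `S`-inducing walk from `a` to `b`; (3) for every
`Z ⊆ (I ∪ O) \ {a,b}`, `a` is not id-separated from `b` given `S ∪ Z` in `A`;
(4) the same for `Z = (I ∪ Anc_A({a,b} ∪ S)) \ {a,b}`. -/
theorem statement1 {N : Type} (A : SADMG N) (hA : A.WF) (a b : N)
    (ha : a ∈ A.obs) (hb : b ∈ A.graph.inputs ∪ A.obs) (hab : a ≠ b) :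
    List.TFAE
      [ A.graph.InducingPathBtw ∅ A.sel a b,
        A.graph.InducingWalkBtw ∅ A.sel a b,
        ∀ Z : Set N, Z ⊆ (A.graph.inputs ∪ A.obs) \ {a, b} →
          ¬ IdSepSimple A.graph {a} {b} (A.sel ∪ Z),
        ¬ IdSepSimple A.graph {a} {b}
          (A.sel ∪ ((A.graph.inputs ∪ A.graph.ancSet ({a, b} ∪ A.sel)) \ {a, b})) ] := by
  have hG : A.graph.IsIADMG := hA.1
  have hSelO : A.sel ⊆ A.graph.outputs := hA.2
  have hdisj : Disjoint A.graph.inputs A.graph.outputs := hG.1.1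
  have hbS : b ∉ A.sel := by
    rcases hb with h | h
    · exact fun hs => (Set.disjoint_left.mp hdisj h) (hSelO hs)
    · exact h.2
  tfae_have 1 → 2 := by
    intro h
    obtain ⟨w, _, hf, hl, hi⟩ := h
    exact ⟨w, hf, hl, hi⟩
  tfae_have 2 → 1 := by
    intro h
    obtain ⟨w, hf, hl, hi⟩ := h
    exact walk_to_path_aux hG w.len w le_rfl hf hl hi
  tfae_have 2 → 3 := by
    intro h2 Z hZ hsep
    have haC : a ∉ A.sel ∪ Z := by
      rintro (h | h)
      · exact ha.2 h
      · exact (hZ h).2 (by simp)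
    have hbC : b ∉ A.sel ∪ Z := by
      rintro (h | h)
      · exact hbS h
      · exact (hZ h).2 (by simp)
    obtain ⟨w, hwf, hwl, hwo⟩ :=
      inducing_to_open hG Set.subset_union_left haC hbC h2
    exact hsep w (by rw [Set.mem_singleton_iff]; exact hwf)
      (Or.inl (by rw [Set.mem_singleton_iff]; exact hwl)) hwo
  tfae_have 3 → 4 := by
    intro h3
    have habS : ({a, b} : Set N) ∪ A.sel ⊆ A.graph.nodes := by
      rintro x (hx | hx)
      · simp only [Set.mem_insert_iff, Set.mem_singleton_iff] at hx
        rcases hx with rfl | rfl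
        · exact Or.inr ha.1
        · rcases hb with h | h
          · exact Or.inl h
          · exact Or.inr h.1
      · exact Or.inr (hSelO hx)
    have hsub :
        ((A.graph.inputs ∪ A.graph.ancSet ({a, b} ∪ A.sel)) \ {a, b}) \ A.sel ⊆
          (A.graph.inputs ∪ A.obs) \ {a, b} := by
      rintro x ⟨⟨hx1, hx2⟩, hx3⟩
      refine ⟨?_, hx2⟩
      rcases hx1 with h | h
      · exact Or.inl h
      · rcases ancSet_mem_nodes hG.1 habS h with h' | h'
        · exact Or.inl h'
        · exact Or.inr ⟨h', hx3⟩
    have := h3 _ hsub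
    rwa [Set.union_diff_self] at this
  tfae_have 4 → 2 := by
    intro h4
    unfold IdSepSimple at h4
    push_neg at h4
    obtain ⟨w, hwf, hwl, hwo⟩ := h4
    have hST : A.sel ⊆ A.graph.ancSet ({a, b} ∪ A.sel) :=
      fun x hx => mem_ancSet_self (Or.inr hx)
    have hCanc :
        A.graph.ancSet
            (A.sel ∪ ((A.graph.inputs ∪ A.graph.ancSet ({a, b} ∪ A.sel)) \ {a, b})) ⊆
          A.graph.inputs ∪ A.graph.ancSet ({a, b} ∪ A.sel) := by
      refine ancSet_bound hG (fun x y hxy hy => anc_ancSet hxy hy) ?_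
      rintro x (hx | hx)
      · exact Or.inr (hST hx)
      · exact hx.1
    have hTC : ∀ x, x ∈ A.graph.ancSet ({a, b} ∪ A.sel) → x ≠ a → x ≠ b →
        x ∈ A.sel ∪ ((A.graph.inputs ∪ A.graph.ancSet ({a, b} ∪ A.sel)) \ {a, b}) := by
      intro x hx hxa hxb
      exact Or.inr ⟨Or.inr hx, by simp [hxa, hxb]⟩
    have hwf' : w.first = a := hwf
    have hwl' : w.last = b := by
      rcases hwl with h | h
      · exact h
      · by_contra hne
        have hla : w.last ≠ a := by
          intro he
          rw [he] at h
          exact (Set.disjoint_left.mp hdisj h) ha.1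
        exact hwo.2.1 (Or.inr ⟨Or.inl h, by simp [hla, hne]⟩)
    exact open_to_inducing hG hCanc hTC w.len w le_rfl hwf' hwl' hwo
  tfae_finish

end
end

section
/- Let A=(I,O,S,E) be an isADMG and M=(I,V,E') an iMAG that represents A. Let a∈I∪V and b∈V be such that a→b is in M. If a→b is visible in M, then there exists no S-inducing walk from a to b in A whose edge at a has an arrowhead at a (i.e., no S-inducing walk into a); in particular, the bidirected edge a↔b is not in A. -/
noncomputable section
open Classical

namespace Stmt2Aux

open MixedGraph

variable {N : Type}

lemma mem_ancSet_self {G : MixedGraph N} {T : Set N} {x : N} (h : x ∈ T) :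
    x ∈ G.ancSet T := ⟨x, h, Relation.ReflTransGen.refl⟩

lemma anc_mono {G : MixedGraph N} {T T' : Set N} (h : ∀ x ∈ T, x ∈ G.ancSet T') :
    G.ancSet T ⊆ G.ancSet T' := by
  rintro z ⟨s, hs, hzs⟩
  obtain ⟨t, ht, hst⟩ := h s hs
  exact ⟨t, ht, hzs.trans hst⟩

lemma ancSet_sub {G : MixedGraph N} {T T' : Set N} (h : T ⊆ T') :
    G.ancSet T ⊆ G.ancSet T' :=
  anc_mono fun x hx => mem_ancSet_self (h hx)

lemma len_pos {G : MixedGraph N} (w : GWalk G) (h : w.first ≠ w.last) : 1 ≤ w.len := by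
  rcases Nat.eq_zero_or_pos w.len with h0 | h1
  · exact absurd (show w.first = w.last by
      show w.f 0 = w.f w.len
      rw [h0]) h
  · exact h1

/-- In an iADMG, for every edge the mark at at least one chosen end is an arrowhead,
or the edge is directed out of that end. -/
lemma edge_cases {G : MixedGraph N} (hG : G.IsIADMG) {z y : N} (h : G.adj z y) :
    G.mark y z = some Mark.arrow ∨ G.dir y z := by
  rcases hG.2.1 z y h with h' | h' | h'
  · exact Or.inl h'.2
  · exact Or.inr h'
  · exact Or.inl h'.2

/-- If an inducing walk ends at `y ∉ Anc({first} ∪ S)` then its last edge has an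
arrowhead at `y`. -/
lemma end_arrow {G : MixedGraph N} (hG : G.IsIADMG) {S : Set N} (w : GWalk G)
    (hlen : 1 ≤ w.len) (hind : G.InducingWalk ∅ S w)
    (hna : w.last ∉ G.ancSet ({w.first} ∪ S)) :
    G.mark w.last (w.f (w.len - 1)) = some Mark.arrow := by
  have hadj : G.adj (w.f (w.len - 1)) (w.f w.len) := by
    have := w.hadj (w.len - 1) (by omega)
    rwa [Nat.sub_add_cancel hlen] at this
  rcases edge_cases hG hadj with h | h
  · exact h
  · exfalso
    have hanc : G.anc (w.f w.len) (w.f (w.len - 1)) := Relation.ReflTransGen.single h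
    rcases Nat.lt_or_ge w.len 2 with h2 | h2
    · have hz : w.f (w.len - 1) = w.first := by
        have h1 : w.len = 1 := by omega
        show w.f (w.len - 1) = w.f 0
        rw [h1]
    -- y ∈ Anc(first)
      exact hna ⟨w.first, Set.mem_union_left _ rfl, hz ▸ hanc⟩
    · have hcol : w.ColliderAt (w.len - 1) := by
        rcases hind.1 (w.len - 1) (by omega) (by omega) with h' | h'
        · exact absurd h' (Set.notMem_empty _)
        · exact h'
      obtain ⟨s, hs, hzs⟩ := hind.2 (w.len - 1) (by omega) (by omega) hcol
      simp only [Set.mem_union, Set.mem_insert_iff, Set.mem_singleton_iff] at hs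
      rcases hs with (hs | hs) | hs
      · exact hna ⟨w.first, Set.mem_union_left _ rfl, hanc.trans (hs ▸ hzs)⟩
      · rw [hs] at hzs
        exact hG.2.2.1 (w.f w.len) (w.f (w.len - 1)) h hzs
      · exact hna ⟨s, Set.mem_union_right _ hs, hanc.trans hzs⟩

/-- If an inducing walk starts at `x ∉ Anc({last} ∪ S)` then its first edge has an
arrowhead at `x`. -/
lemma start_arrow {G : MixedGraph N} (hG : G.IsIADMG) {S : Set N} (w : GWalk G)
    (hlen : 1 ≤ w.len) (hind : G.InducingWalk ∅ S w)
    (hna : w.first ∉ G.ancSet ({w.last} ∪ S)) :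
    G.mark w.first (w.f 1) = some Mark.arrow := by
  have hadj : G.adj (w.f 1) (w.f 0) := by
    have h0 := w.hadj 0 (by omega)
    exact (hG.1.2.2.2.1 _ _ h0)
  rcases edge_cases hG hadj with h | h
  · exact h
  · exfalso
    have hanc : G.anc (w.f 0) (w.f 1) := Relation.ReflTransGen.single h
    rcases Nat.lt_or_ge w.len 2 with h2 | h2
    · have hz : w.f 1 = w.last := by
        have h1 : w.len = 1 := by omega
        show w.f 1 = w.f w.len
        rw [h1]
      exact hna ⟨w.last, Set.mem_union_left _ rfl, hz ▸ hanc⟩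
    · have hcol : w.ColliderAt 1 := by
        rcases hind.1 1 (by omega) (by omega) with h' | h'
        · exact absurd h' (Set.notMem_empty _)
        · exact h'
      obtain ⟨s, hs, hzs⟩ := hind.2 1 (by omega) (by omega) hcol
      simp only [Set.mem_union, Set.mem_insert_iff, Set.mem_singleton_iff] at hs
      rcases hs with (hs | hs) | hs
      · rw [hs] at hzs
        exact hG.2.2.1 (w.f 0) (w.f 1) h hzs
      · exact hna ⟨w.last, Set.mem_union_left _ rfl,
          hanc.trans (hs ▸ hzs)⟩
      · exact hna ⟨s, Set.mem_union_right _ hs, hanc.trans hzs⟩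

/-- Concatenated node function of two walks. -/
def catf {G : MixedGraph N} (w1 w2 : GWalk G) (k : ℕ) : N :=
  if k ≤ w1.len then w1.f k else w2.f (k - w1.len)

lemma catf_le {G : MixedGraph N} (w1 w2 : GWalk G) {k : ℕ} (hk : k ≤ w1.len) :
    catf w1 w2 k = w1.f k := if_pos hk

lemma catf_ge {G : MixedGraph N} (w1 w2 : GWalk G) (h : w1.last = w2.first)
    {k : ℕ} (hk : w1.len ≤ k) : catf w1 w2 k = w2.f (k - w1.len) := by
  by_cases hk' : k ≤ w1.len
  · have hkk : k = w1.len := le_antisymm hk' hk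
    show (if k ≤ w1.len then w1.f k else w2.f (k - w1.len)) = w2.f (k - w1.len)
    rw [if_pos hk', hkk, Nat.sub_self]
    exact h
  · exact if_neg hk'

/-- Concatenation of two walks. -/
def concat {G : MixedGraph N} (w1 w2 : GWalk G) (h : w1.last = w2.first) : GWalk G where
  len := w1.len + w2.len
  f := catf w1 w2
  hadj := by
    intro i hi
    by_cases h1 : i < w1.len
    · rw [catf_le w1 w2 (le_of_lt h1), catf_le w1 w2 (Nat.succ_le_of_lt h1)]
      exact w1.hadj i h1
    · push_neg at h1
      rw [catf_ge w1 w2 h h1, catf_ge w1 w2 h (by omega)]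
      have e : i + 1 - w1.len = (i - w1.len) + 1 := by omega
      rw [e]
      exact w2.hadj (i - w1.len) (by omega)

lemma concat_first {G : MixedGraph N} (w1 w2 : GWalk G) (h : w1.last = w2.first) :
    (concat w1 w2 h).first = w1.first :=
  catf_le w1 w2 (Nat.zero_le _)

lemma concat_last {G : MixedGraph N} (w1 w2 : GWalk G) (h : w1.last = w2.first) :
    (concat w1 w2 h).last = w2.last := by
  show catf w1 w2 (w1.len + w2.len) = w2.f w2.len
  rw [catf_ge w1 w2 h (by omega)]
  congr 1
  omega

/-- Concatenating an inducing walk `p` from `u` to `v` with an inducing walk `w`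
from `v` to `b`, provided both edges at the junction `v` carry arrowheads at `v`
and `v ∈ Anc({b} ∪ S)`. -/
lemma step {G : MixedGraph N} (hG : G.IsIADMG) {S : Set N} {u v b : N}
    (p w : GWalk G)
    (hpf : p.first = u) (hpl : p.last = v) (hpind : G.InducingWalk ∅ S p)
    (hplen : 1 ≤ p.len)
    (hwf : w.first = v) (hwl : w.last = b) (hwind : G.InducingWalk ∅ S w)
    (hwlen : 1 ≤ w.len)
    (harrL : G.mark v (p.f (p.len - 1)) = some Mark.arrow)
    (harrR : G.mark v (w.f 1) = some Mark.arrow)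
    (hvanc : v ∈ G.ancSet ({b} ∪ S)) :
    ∃ q : GWalk G, q.first = u ∧ q.last = b ∧ G.InducingWalk ∅ S q ∧
      1 ≤ q.len ∧ q.f 1 = p.f 1 := by
  have hjoin : p.last = w.first := by rw [hpl, hwf]
  refine ⟨concat p w hjoin, by rw [concat_first, hpf], by rw [concat_last, hwl], ?_, ?_, ?_⟩
  · -- inducing
    have hvanc' : v ∈ G.ancSet (({u, b} : Set N) ∪ S) := by
      obtain ⟨s, hs, hvs⟩ := hvanc
      refine ⟨s, ?_, hvs⟩
      rcases hs with hs | hs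
      · exact Set.mem_union_left _ (Set.mem_insert_of_mem _ hs)
      · exact Set.mem_union_right _ hs
    have hsub1 : G.ancSet (({u, v} : Set N) ∪ S) ⊆ G.ancSet (({u, b} : Set N) ∪ S) := by
      apply anc_mono
      rintro x hx
      rcases hx with hx | hx
      · rcases hx with hx | hx
        · exact mem_ancSet_self (Set.mem_union_left _ (hx ▸ Set.mem_insert _ _))
        · rw [Set.mem_singleton_iff] at hx
          exact hx ▸ hvanc'
      · exact mem_ancSet_self (Set.mem_union_right _ hx)
    have hsub2 : G.ancSet (({v, b} : Set N) ∪ S) ⊆ G.ancSet (({u, b} : Set N) ∪ S) := by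
      apply anc_mono
      rintro x hx
      rcases hx with hx | hx
      · rcases hx with hx | hx
        · exact hx ▸ hvanc'
        · rw [Set.mem_singleton_iff] at hx
          exact mem_ancSet_self (Set.mem_union_left _
            (hx ▸ Set.mem_insert_of_mem _ (Set.mem_singleton _)))
      · exact mem_ancSet_self (Set.mem_union_right _ hx)
    have hset : ({(concat p w hjoin).first, (concat p w hjoin).last} : Set N) ∪ S
        = ({u, b} : Set N) ∪ S := by
      rw [concat_first, concat_last, hpf, hwl]
    have hcol : ∀ i, 0 < i → i < (concat p w hjoin).len →
        (concat p w hjoin).ColliderAt i ∧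
        (concat p w hjoin).f i ∈ G.ancSet (({u, b} : Set N) ∪ S) := by
      intro i hi0 hilen
      have hilen' : i < p.len + w.len := hilen
      rcases Nat.lt_trichotomy i p.len with hlt | heq | hgt
      · -- inside p
        have hcolp : p.ColliderAt i := by
          rcases hpind.1 i hi0 hlt with h' | h'
          · exact absurd h' (Set.notMem_empty _)
          · exact h'
        constructor
        · constructor
          · show G.mark (catf p w i) (catf p w (i - 1)) = some Mark.arrow
            rw [catf_le p w (le_of_lt hlt), catf_le p w (by omega)]
            exact hcolp.1
          · show G.mark (catf p w i) (catf p w (i + 1)) = some Mark.arrow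
            rw [catf_le p w (le_of_lt hlt), catf_le p w (by omega)]
            exact hcolp.2
        · show catf p w i ∈ _
          rw [catf_le p w (le_of_lt hlt)]
          have := hpind.2 i hi0 hlt hcolp
          rw [hpf, hpl] at this
          exact hsub1 this
      · -- junction
        subst heq
        have hfi : catf p w p.len = v := by
          rw [catf_le p w le_rfl]
          exact hpl
        constructor
        · constructor
          · show G.mark (catf p w p.len) (catf p w (p.len - 1)) = some Mark.arrow
            rw [hfi, catf_le p w (by omega)]
            exact harrL
          · show G.mark (catf p w p.len) (catf p w (p.len + 1)) = some Mark.arrow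
            rw [hfi, catf_ge p w hjoin (by omega)]
            have e : p.len + 1 - p.len = 1 := by omega
            rw [e]
            exact harrR
        · show catf p w p.len ∈ _
          rw [hfi]
          exact hvanc'
      · -- inside w
        have hj0 : 0 < i - p.len := by omega
        have hjlen : i - p.len < w.len := by omega
        have hcolw : w.ColliderAt (i - p.len) := by
          rcases hwind.1 (i - p.len) hj0 hjlen with h' | h'
          · exact absurd h' (Set.notMem_empty _)
          · exact h'
        constructor
        · constructor
          · show G.mark (catf p w i) (catf p w (i - 1)) = some Mark.arrow
            rw [catf_ge p w hjoin (le_of_lt hgt), catf_ge p w hjoin (by omega)]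
            have e : i - 1 - p.len = (i - p.len) - 1 := by omega
            rw [e]
            exact hcolw.1
          · show G.mark (catf p w i) (catf p w (i + 1)) = some Mark.arrow
            rw [catf_ge p w hjoin (le_of_lt hgt), catf_ge p w hjoin (by omega)]
            have e : i + 1 - p.len = (i - p.len) + 1 := by omega
            rw [e]
            exact hcolw.2
        · show catf p w i ∈ _
          rw [catf_ge p w hjoin (le_of_lt hgt)]
          have := hwind.2 (i - p.len) hj0 hjlen hcolw
          rw [hwf, hwl] at this
          exact hsub2 this
    constructor
    · intro i hi0 hilen
      exact Or.inr (hcol i hi0 hilen).1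
    · intro i hi0 hilen _
      rw [hset]
      exact (hcol i hi0 hilen).2
  · show 1 ≤ p.len + w.len
    omega
  · show catf p w 1 = p.f 1
    exact catf_le p w hplen

/-- Node function of the shortcut of a walk: skip from position `i` to `i + d`. -/
def shortf {G : MixedGraph N} (w : GWalk G) (i d k : ℕ) : N :=
  if k ≤ i then w.f k else w.f (k + d)

lemma shortf_le {G : MixedGraph N} (w : GWalk G) {i d k : ℕ} (hk : k ≤ i) :
    shortf w i d k = w.f k := if_pos hk

lemma shortf_ge {G : MixedGraph N} (w : GWalk G) {i d k : ℕ}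
    (h : w.f i = w.f (i + d)) (hk : i ≤ k) : shortf w i d k = w.f (k + d) := by
  by_cases hk' : k ≤ i
  · have hkk : k = i := le_antisymm hk' hk
    subst hkk
    rw [shortf_le w le_rfl]
    exact h
  · exact if_neg hk'

/-- An inducing walk between `c` and `b` yields an inducing path between them. -/
lemma walk_to_path {G : MixedGraph N} {S : Set N} {c b : N} :
    ∀ n (w : GWalk G), w.len ≤ n → w.first = c → w.last = b →
      G.InducingWalk ∅ S w → G.InducingPathBtw ∅ S c b := by
  intro n
  induction n with
  | zero =>
    intro w hn hf hl hind
    exact ⟨w, fun i hi j hj _ => by omega, hf, hl, hind⟩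
  | succ n ih =>
    intro w hn hf hl hind
    by_cases hp : w.IsPath
    · exact ⟨w, hp, hf, hl, hind⟩
    · -- find a repeated node
      rw [GWalk.IsPath] at hp
      push_neg at hp
      obtain ⟨i0, hi0, j0, hj0, heq0, hne0⟩ := hp
      -- normalize so that i < j
      obtain ⟨i, j, hij, hj, heq⟩ : ∃ i j, i < j ∧ j ≤ w.len ∧ w.f i = w.f j := by
        rcases Nat.lt_or_ge i0 j0 with h | h
        · exact ⟨i0, j0, h, hj0, heq0⟩
        · exact ⟨j0, i0, by omega, hi0, heq0.symm⟩
      -- shortcut walk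
      set d := j - i with hd
      have hd1 : 1 ≤ d := by omega
      have heq' : w.f i = w.f (i + d) := by
        have e : i + d = j := by omega
        rw [e]
        exact heq
      set w' : GWalk G := {
        len := w.len - d
        f := shortf w i d
        hadj := by
          intro k hk
          by_cases h1 : k < i
          · rw [shortf_le w (le_of_lt h1), shortf_le w (by omega)]
            exact w.hadj k (by omega)
          · push_neg at h1
            rw [shortf_ge w heq' h1, shortf_ge w heq' (by omega)]
            have e : k + 1 + d = (k + d) + 1 := by omega
            rw [e]
            exact w.hadj (k + d) (by omega) } with hw'
      have hw'f : ∀ k, w'.f k = shortf w i d k := fun _ => rfl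
      have hw'len : w'.len = w.len - d := rfl
      have hw'first : w'.first = c := by
        show w'.f 0 = c
        rw [hw'f, shortf_le w (Nat.zero_le _)]
        exact hf
      have hw'last : w'.last = b := by
        show w'.f w'.len = b
        rw [hw'f, hw'len, shortf_ge w heq' (by omega : i ≤ w.len - d)]
        have e : w.len - d + d = w.len := by omega
        rw [e]
        exact hl
      have hw'ind : G.InducingWalk ∅ S w' := by
        have hset : ({w'.first, w'.last} : Set N) ∪ S = ({w.first, w.last} : Set N) ∪ S := by
          rw [hw'first, hw'last, hf, hl]
        have hcol : ∀ k, 0 < k → k < w'.len →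
            w'.ColliderAt k ∧ w'.f k ∈ G.ancSet (({w.first, w.last} : Set N) ∪ S) := by
          intro k hk0 hklen
          have hklen' : k < w.len - d := hklen
          rcases Nat.lt_trichotomy k i with hlt | heqk | hgt
          · have hcolk : w.ColliderAt k := by
              rcases hind.1 k hk0 (by omega) with h' | h'
              · exact absurd h' (Set.notMem_empty _)
              · exact h'
            refine ⟨⟨?_, ?_⟩, ?_⟩
            · show G.mark (w'.f k) (w'.f (k - 1)) = some Mark.arrow
              rw [hw'f, hw'f, shortf_le w (le_of_lt hlt), shortf_le w (by omega)]
              exact hcolk.1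
            · show G.mark (w'.f k) (w'.f (k + 1)) = some Mark.arrow
              rw [hw'f, hw'f, shortf_le w (le_of_lt hlt), shortf_le w (by omega)]
              exact hcolk.2
            · show w'.f k ∈ _
              rw [hw'f, shortf_le w (le_of_lt hlt)]
              exact hind.2 k hk0 (by omega) hcolk
          · subst heqk
            have hjlt : j < w.len := by omega
            have hcoli : w.ColliderAt k := by
              rcases hind.1 k hk0 (by omega) with h' | h'
              · exact absurd h' (Set.notMem_empty _)
              · exact h'
            have hcolj : w.ColliderAt j := by
              rcases hind.1 j (by omega) hjlt with h' | h'
              · exact absurd h' (Set.notMem_empty _)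
              · exact h'
            refine ⟨⟨?_, ?_⟩, ?_⟩
            · show G.mark (w'.f k) (w'.f (k - 1)) = some Mark.arrow
              rw [hw'f, hw'f, shortf_le w le_rfl, shortf_le w (by omega)]
              exact hcoli.1
            · show G.mark (w'.f k) (w'.f (k + 1)) = some Mark.arrow
              rw [hw'f, hw'f, shortf_le w le_rfl, shortf_ge w heq' (by omega)]
              have e1 : k + 1 + d = j + 1 := by omega
              rw [e1, heq]
              exact hcolj.2
            · show w'.f k ∈ _
              rw [hw'f, shortf_le w le_rfl]
              exact hind.2 k hk0 (by omega) hcoli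
          · have hm0 : 0 < k + d := by omega
            have hmlen : k + d < w.len := by omega
            have hcolm : w.ColliderAt (k + d) := by
              rcases hind.1 (k + d) hm0 hmlen with h' | h'
              · exact absurd h' (Set.notMem_empty _)
              · exact h'
            refine ⟨⟨?_, ?_⟩, ?_⟩
            · show G.mark (w'.f k) (w'.f (k - 1)) = some Mark.arrow
              rw [hw'f, hw'f, shortf_ge w heq' (by omega), shortf_ge w heq' (by omega)]
              have e : k - 1 + d = (k + d) - 1 := by omega
              rw [e]
              exact hcolm.1
            · show G.mark (w'.f k) (w'.f (k + 1)) = some Mark.arrow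
              rw [hw'f, hw'f, shortf_ge w heq' (by omega), shortf_ge w heq' (by omega)]
              have e : k + 1 + d = (k + d) + 1 := by omega
              rw [e]
              exact hcolm.2
            · show w'.f k ∈ _
              rw [hw'f, shortf_ge w heq' (by omega)]
              exact hind.2 (k + d) hm0 hmlen hcolm
        constructor
        · intro k hk0 hklen
          exact Or.inr (hcol k hk0 hklen).1
        · intro k hk0 hklen _
          rw [hset]
          exact (hcol k hk0 hklen).2
      have hlen' : w'.len ≤ n := by
        rw [hw'len]
        omega
      exact ih w' hlen' hw'first hw'last hw'ind

/-- One prepending step at the level of the represented graphs. -/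
lemma prepend {N : Type} (A : SADMG N) (hA : A.WF) (M : MixedGraph N)
    (hrep : RepresentsS M A) {u v b : N}
    (huv : M.adj u v) (harr : M.mark v u = some Mark.arrow)
    (hvanc : v ∈ A.graph.ancSet ({b} ∪ A.sel))
    (q : GWalk A.graph) (hqf : q.first = v) (hql : q.last = b)
    (hqind : A.graph.InducingWalk ∅ A.sel q) (hqlen : 1 ≤ q.len)
    (hqarr : A.graph.mark v (q.f 1) = some Mark.arrow)
    (hMWF : M.WF) :
    ∃ q' : GWalk A.graph, q'.first = u ∧ q'.last = b ∧
      A.graph.InducingWalk ∅ A.sel q' ∧ 1 ≤ q'.len ∧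
      (M.mark u v = some Mark.arrow →
        A.graph.mark u (q'.f 1) = some Mark.arrow) := by
  have hne : u ≠ v := by
    intro h
    subst h
    rw [hMWF.2.2.2.2.1 u] at harr
    exact nomatch harr
  have hmem := hMWF.2.2.2.2.2 v u (by rw [harr]; rfl)
  have hadjiff := hrep.2.2.1 u v hne hmem.2 hmem.1
  obtain ⟨-, p, hpp, hpf, hpl, hpind⟩ := hadjiff.mp huv
  have hplen : 1 ≤ p.len := len_pos p (by rw [hpf, hpl]; exact hne)
  have hvna : v ∉ A.graph.ancSet ({u} ∪ A.sel) := hrep.2.2.2.1 v u harr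
  have harrL : A.graph.mark v (p.f (p.len - 1)) = some Mark.arrow := by
    have := end_arrow hA.1 p hplen hpind (by rw [hpl, hpf]; exact hvna)
    rwa [hpl] at this
  obtain ⟨q', h1, h2, h3, h4, h5⟩ :=
    step hA.1 p q hpf hpl hpind hplen hqf hql hqind hqlen harrL hqarr hvanc
  refine ⟨q', h1, h2, h3, h4, ?_⟩
  intro harr2
  have huna : u ∉ A.graph.ancSet ({v} ∪ A.sel) := hrep.2.2.2.1 u v harr2
  have := start_arrow hA.1 p hplen hpind (by rw [hpf, hpl]; exact huna)
  rw [hpf] at this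
  rw [h5]
  exact this

end Stmt2Aux

/-- Let `A` be an isADMG and `M` an iMAG representing `A`.  If the
directed edge `a → b` is in `M` and is visible, then there is no `S`-inducing walk
from `a` to `b` in `A` whose edge at `a` has an arrowhead at `a`; in particular,
the bidirected edge `a ↔ b` is not in `A`. -/
theorem statement2 {N : Type} (A : SADMG N) (hA : A.WF)
    (M : MixedGraph N) (hM : M.IsIMAG) (hrep : RepresentsS M A)
    (a b : N) (ha : a ∈ M.nodes) (hb : b ∈ M.outputs)
    (hdir : M.dir a b) (hvis : M.VisibleCond a b) :
    (¬ ∃ w : GWalk A.graph, w.first = a ∧ w.last = b ∧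
        A.graph.InducingWalk ∅ A.sel w ∧
        A.graph.mark (w.f 0) (w.f 1) = some Mark.arrow) ∧
    ¬ A.graph.bidir a b := by
  classical
  open Stmt2Aux in
  have hMWF : M.WF := hM.1.1
  have hab : a ≠ b := by
    intro h
    subst h
    have h1 := hdir.1
    rw [hMWF.2.2.2.2.1 a] at h1
    exact nomatch h1
  have hbnotin : b ∉ M.inputs := fun hbI =>
    Set.disjoint_left.mp hMWF.1 hbI hb
  have haanc : a ∈ A.graph.ancSet ({b} ∪ A.sel) := hrep.2.2.2.2 a b hdir.1
  have main : ¬ ∃ w : GWalk A.graph, w.first = a ∧ w.last = b ∧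
      A.graph.InducingWalk ∅ A.sel w ∧
      A.graph.mark (w.f 0) (w.f 1) = some Mark.arrow := by
    rintro ⟨w, hwf, hwl, hwind, hwarr⟩
    have hwlen : 1 ≤ w.len := Stmt2Aux.len_pos w (by rw [hwf, hwl]; exact hab)
    have hwarr' : A.graph.mark a (w.f 1) = some Mark.arrow := by
      rw [← hwf]; exact hwarr
    rcases hvis with haI | ⟨c, hcb, hcnadj, hor⟩
    · -- a is an input node of M, hence of A.graph: no arrowhead at a in A
      rw [hrep.1] at haI
      exact hA.1.2.2.2.1 a haI (w.f 1) hwarr'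
    · -- helper to finish once we have an inducing walk from c to b
      have finish : ∀ q : GWalk A.graph, q.first = c → q.last = b →
          A.graph.InducingWalk ∅ A.sel q → c ∈ M.nodes → False := by
        intro q hqf hql hqind hcnodes
        have hpath := Stmt2Aux.walk_to_path q.len q le_rfl hqf hql hqind
        have hadjcb : M.adj c b :=
          (hrep.2.2.1 c b hcb hcnodes (Or.inr hb)).mpr
            ⟨fun h => hbnotin h.2, hpath⟩
        exact hcnadj hadjcb
      rcases hor with harrM | ⟨pw, hppath, hlen2, hpwf, hpwl, harr1, hbid, hdirb⟩
      · -- case c *→ a in M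
        have hmem := hMWF.2.2.2.2.2 a c (by rw [harrM]; rfl)
        have hadjca : M.adj c a := hMWF.2.2.2.1 a c (by rw [harrM]; rfl)
        obtain ⟨q', hq1, hq2, hq3, _, _⟩ :=
          Stmt2Aux.prepend A hA M hrep hadjca harrM haanc w hwf hwl hwind hwlen
            hwarr' hMWF
        exact finish q' hq1 hq2 hq3 hmem.2
      · -- case c *→ v₁ ↔ ⋯ ↔ a in M with vᵢ → b
        set n := pw.len with hn
        have hpwl' : pw.f n = a := hpwl
        have hpwf' : pw.f 0 = c := hpwf
        -- ancestry facts for the vᵢ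
        have hvanc : ∀ i, 1 ≤ i → i ≤ n →
            pw.f i ∈ A.graph.ancSet ({b} ∪ A.sel) := by
          intro i h1 h2
          rcases Nat.lt_or_ge i n with h | h
          · exact hrep.2.2.2.2 _ b (hdirb i h1 h).1
          · have : i = n := by omega
            rw [this, hpwl']
            exact haanc
        -- downward induction along pw
        have key : ∀ d, ∀ i, i + d = n → 1 ≤ i →
            ∃ q : GWalk A.graph, q.first = pw.f i ∧ q.last = b ∧
              A.graph.InducingWalk ∅ A.sel q ∧ 1 ≤ q.len ∧
              A.graph.mark (pw.f i) (q.f 1) = some Mark.arrow := by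
          intro d
          induction d with
          | zero =>
            intro i hi h1
            have : i = n := by omega
            subst this
            exact ⟨w, by rw [hwf, hpwl'], hwl, hwind, hwlen, by rw [hpwl']; exact hwarr'⟩
          | succ d ih =>
            intro i hi h1
            obtain ⟨q, hqf, hql, hqind, hqlen, hqarr⟩ := ih (i + 1) (by omega) (by omega)
            have hilt : i < n := by omega
            have hbidi : M.bidir (pw.f i) (pw.f (i + 1)) := hbid i h1 hilt
            have hadjuv : M.adj (pw.f i) (pw.f (i + 1)) := by
              rw [MixedGraph.adj, hbidi.1]; rfl
            obtain ⟨q', h1', h2', h3', h4', h5'⟩ :=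
              Stmt2Aux.prepend A hA M hrep hadjuv hbidi.2
                (hvanc (i + 1) (by omega) (by omega)) q hqf hql hqind hqlen hqarr hMWF
            exact ⟨q', h1', h2', h3', h4', h5' hbidi.1⟩
        obtain ⟨q, hqf, hql, hqind, hqlen, hqarr⟩ := key (n - 1) 1 (by omega) le_rfl
        -- final step: prepend the edge c — v₁
        have hadjc1 : M.adj (pw.f 0) (pw.f 1) := pw.hadj 0 (by omega)
        have harr1' : M.mark (pw.f 1) (pw.f 0) = some Mark.arrow := harr1
        obtain ⟨q', h1', h2', h3', _, _⟩ :=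
          Stmt2Aux.prepend A hA M hrep hadjc1 harr1'
            (hvanc 1 le_rfl (by omega)) q hqf hql hqind hqlen hqarr hMWF
        have hcnodes : c ∈ M.nodes := by
          have := hMWF.2.2.2.2.2 (pw.f 0) (pw.f 1) hadjc1
          rw [hpwf'] at this
          exact this.1
        exact finish q' (by rw [h1', hpwf']) h2' h3' hcnodes
  refine ⟨main, ?_⟩
  intro hbidab
  apply main
  refine ⟨⟨1, fun k => if k = 0 then a else b, ?_⟩, rfl, rfl, ⟨?_, ?_⟩, ?_⟩
  · intro i hi
    have : i = 0 := by omega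
    subst this
    show A.graph.adj a b
    rw [MixedGraph.adj, hbidab.1]
    rfl
  · intro i hi0 hi1
    have h1 : i < 1 := hi1
    omega
  · intro i hi0 hi1
    have h1 : i < 1 := hi1
    omega
  · show A.graph.mark a b = some Mark.arrow
    exact hbidab.1

end
end
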